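/- arXiv:1512.08548 — 6 statements merged into one kernel-verified Lean document; each statement's English description precedes it below -/
import Mathlib

section
/- Let 0<q<1 and let α be a real number with 2α≤1. Then the function f_{α,1}(x;q) = Γ_q(x+1)·exp(−Li₂(1−q^x)/log q) / ((1−q^x)/(1−q))^{x+1−α} is logarithmically completely monotonic on (0,∞); that is, for every integer n≥1 and every x>0, (−1)^n (log f_{α,1}(·;q))^{(n)}(x) ≥ 0. -/
/-- The `q`-gamma function for `0 < q < 1`:
`Γ_q(x) = (1−q)^(1−x) ∏_{j=0}^∞ (1−q^(j+1))/(1−q^(j+x))`. -/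
noncomputable def qGamma (q x : ℝ) : ℝ :=
  (1 - q) ^ (1 - x) * ∏' j : ℕ, (1 - q ^ (j + 1)) / (1 - q ^ ((j : ℝ) + x))

/-- The dilogarithm `Li₂(z) = −∫₀^z log(1−t)/t dt`. -/
noncomputable def dilog (z : ℝ) : ℝ := -∫ t in (0:ℝ)..z, Real.log (1 - t) / t

/-- The function `f_{α,β}(x;q) = Γ_q(x+β)·exp(−Li₂(1−q^x)/log q) / ((1−q^x)/(1−q))^(x+β−α)`. -/
noncomputable def qf (α β q x : ℝ) : ℝ :=
  qGamma q (x + β) * Real.exp (-dilog (1 - q ^ x) / Real.log q) /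
    ((1 - q ^ x) / (1 - q)) ^ (x + β - α)

open Real Set Topology MeasureTheory intervalIntegral

noncomputable def bcoef (q α : ℝ) (k : ℕ) : ℝ :=
  -Real.log q * (q ^ (k + 1) / (1 - q ^ (k + 1))) + -Real.log q * (1 - α) - 1 / ((k : ℝ) + 1)

noncomputable def Gser (q α : ℝ) (m : ℕ) (x : ℝ) : ℝ :=
  ∑' k : ℕ, bcoef q α k * (((k : ℝ) + 1) * Real.log q) ^ m *
    Real.exp (((k : ℝ) + 1) * (Real.log q * x))

noncomputable def Fterm (q : ℝ) (j : ℕ) (y : ℝ) : ℝ :=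
  Real.log (1 - q ^ (j + 1)) - Real.log (1 - q ^ ((j : ℝ) + y))

section Aux

variable {q α : ℝ}

lemma aux_core {u : ℝ} (hu : 0 ≤ u) : 2 - u ≤ (2 + u) * Real.exp (-u) := by
  have key : ∀ v : ℝ, HasDerivAt (fun w => (2 + w) * Real.exp (-w) + w)
      (1 - (1 + v) * Real.exp (-v)) v := by
    intro v
    have h1 : HasDerivAt (fun w : ℝ => Real.exp (-w)) (-Real.exp (-v)) v := by
      simpa [Function.comp_def] using (Real.hasDerivAt_exp (-v)).comp v ((hasDerivAt_id v).neg)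
    have h2 := (((hasDerivAt_const v (2:ℝ)).add (hasDerivAt_id v))).mul h1
    have h3 := h2.add (hasDerivAt_id v)
    simp only [Pi.add_def, Pi.mul_def, id] at h3
    refine h3.congr_deriv ?_
    ring
  have mono : MonotoneOn (fun w => (2 + w) * Real.exp (-w) + w) (Ici (0:ℝ)) := by
    apply monotoneOn_of_deriv_nonneg (convex_Ici 0)
    · exact (Continuous.continuousOn (by continuity))
    · intro v hv
      exact ((key v).differentiableAt).differentiableWithinAt
    · intro v hv
      rw [(key v).deriv]
      have h := Real.add_one_le_exp v
      have h2 := Real.exp_pos v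
      have h3 : Real.exp (-v) = (Real.exp v)⁻¹ := Real.exp_neg v
      rw [h3]
      rw [sub_nonneg, ← div_eq_mul_inv, div_le_one h2]
      linarith
  have := mono (self_mem_Ici) hu hu
  simp only [neg_zero, Real.exp_zero, mul_one, add_zero] at this
  linarith

lemma bcoef_nonneg {q α : ℝ} (hq0 : 0 < q) (hq1 : q < 1) (hα : 2 * α ≤ 1) (k : ℕ) :
    0 ≤ bcoef q α k := by
  have hlog : Real.log q < 0 := Real.log_neg hq0 hq1
  set L : ℝ := -Real.log q with hL
  have hLpos : 0 < L := by simp [hL]; linarith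
  set K : ℝ := (k : ℝ) + 1 with hK
  have hKpos : 0 < K := by positivity
  set u : ℝ := K * L with hu
  have hupos : 0 < u := mul_pos hKpos hLpos
  set t : ℝ := q ^ (k + 1) with ht
  have ht0 : 0 < t := pow_pos hq0 _
  have ht1 : t < 1 := pow_lt_one₀ hq0.le hq1 (Nat.succ_ne_zero k)
  have h1t : 0 < 1 - t := by linarith
  have hte : t = Real.exp (-u) := by
    rw [ht, hu, hK, hL]
    rw [show -((((k:ℝ))+1) * -Real.log q) = ((k+1 : ℕ) : ℝ) * Real.log q by push_cast; ring]
    rw [Real.exp_nat_mul, Real.exp_log hq0]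
  have hcore : 2 - u ≤ (2 + u) * t := by rw [hte]; exact aux_core hupos.le
  -- key: 1 - t ≤ u * t + u * (1 - t) / 2
  have hkey : 1 - t ≤ u * t + u * (1 - t) / 2 := by nlinarith
  -- bcoef = L * (t/(1-t)) + L * (1-α) - 1/K
  have h1α : (1:ℝ)/2 ≤ 1 - α := by linarith
  have goal2 : 1 / K ≤ L * (t / (1 - t)) + L * (1 - α) := by
    have h2 : L * (1 - α) ≥ L / 2 := by nlinarith
    have h3 : 1 / K ≤ L * (t / (1 - t)) + L / 2 := by
      rw [div_le_iff₀ hKpos] at *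
      have e1 : L * (t / (1 - t)) = L * t / (1 - t) := by ring
      rw [e1]
      rw [show (L * t / (1 - t) + L / 2) * K = (K * L * t + K * L * (1 - t) / 2) / (1 - t) by
        field_simp]
      rw [le_div_iff₀ h1t]
      rw [← hu]
      nlinarith
    linarith
  have : bcoef q α k = L * (t / (1 - t)) + L * (1 - α) - 1 / K := by
    rw [bcoef, hL, hK, ht]
  rw [this]
  linarith

lemma bcoef_le {q α : ℝ} (hq0 : 0 < q) (hq1 : q < 1) :
    ∀ k, bcoef q α k ≤ -Real.log q * (q / (1 - q)) + -Real.log q * (1 - α) := by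
  intro k
  have hlog : Real.log q < 0 := Real.log_neg hq0 hq1
  have hq1' : 0 < 1 - q := by linarith
  have ht0 : 0 < q ^ (k + 1) := pow_pos hq0 _
  have ht1 : q ^ (k + 1) < 1 := pow_lt_one₀ hq0.le hq1 (Nat.succ_ne_zero k)
  have htq : q ^ (k + 1) ≤ q := by
    calc q ^ (k + 1) ≤ q ^ 1 := pow_le_pow_of_le_one hq0.le hq1.le (by omega)
    _ = q := pow_one q
  have hK : (0:ℝ) < (k : ℝ) + 1 := by positivity
  have hdiv : q ^ (k + 1) / (1 - q ^ (k + 1)) ≤ q / (1 - q) := by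
    apply div_le_div₀ (le_of_lt hq0) htq hq1'
    linarith
  have h1 : -Real.log q * (q ^ (k + 1) / (1 - q ^ (k + 1))) ≤ -Real.log q * (q / (1 - q)) := by
    apply mul_le_mul_of_nonneg_left hdiv (by linarith)
  have h2 : (0:ℝ) < 1 / ((k:ℝ) + 1) := by positivity
  rw [bcoef]
  linarith

lemma exp_pow_eq {c : ℝ} (k : ℕ) :
    Real.exp (((k : ℝ) + 1) * c) = Real.exp c ^ (k + 1) := by
  rw [show ((k : ℝ) + 1) * c = ((k + 1 : ℕ) : ℝ) * c by push_cast; ring, Real.exp_nat_mul]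

lemma summable_aux {q α : ℝ} (hq0 : 0 < q) (hq1 : q < 1) (hα : 2 * α ≤ 1) (m : ℕ)
    {x : ℝ} (hx : 0 < x) :
    Summable (fun k : ℕ => bcoef q α k * (((k : ℝ) + 1) * -Real.log q) ^ m *
      Real.exp (((k : ℝ) + 1) * (Real.log q * x))) := by
  have hlog : Real.log q < 0 := Real.log_neg hq0 hq1
  set L : ℝ := -Real.log q with hL
  have hLpos : 0 < L := by simp [hL]; linarith
  set B : ℝ := -Real.log q * (q / (1 - q)) + -Real.log q * (1 - α) with hB
  set r : ℝ := Real.exp (Real.log q * x) with hr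
  have hr0 : 0 < r := Real.exp_pos _
  have hr1 : r < 1 := by
    rw [hr, Real.exp_lt_one_iff]
    exact mul_neg_of_neg_of_pos hlog hx
  -- comparison series
  have hsum : Summable (fun k : ℕ => (B * L ^ m) * (((k:ℝ) + 1) ^ m * r ^ (k + 1))) := by
    apply Summable.mul_left
    have h0 : Summable (fun n : ℕ => (n : ℝ) ^ m * r ^ n) :=
      summable_pow_mul_geometric_of_norm_lt_one m (by rw [Real.norm_eq_abs, abs_of_pos hr0]; exact hr1)
    have := h0.comp_injective Nat.succ_injective
    apply this.congr
    intro k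
    simp only [Function.comp_apply, Nat.succ_eq_add_one]
    push_cast
    ring
  refine Summable.of_nonneg_of_le (fun k => ?_) (fun k => ?_) hsum
  · have h1 := bcoef_nonneg hq0 hq1 hα k
    have h2 : (0:ℝ) ≤ ((k : ℝ) + 1) * L := mul_nonneg (by positivity) hLpos.le
    exact mul_nonneg (mul_nonneg h1 (pow_nonneg h2 m)) (Real.exp_pos _).le
  · 
    have h1 := bcoef_nonneg hq0 hq1 hα k
    have h2 := bcoef_le hq0 hq1 (α := α) k
    rw [exp_pow_eq k]
    rw [show (((k:ℝ) + 1) * L) ^ m = L ^ m * ((k:ℝ) + 1) ^ m by rw [mul_pow]; ring]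
    have h3 : (0:ℝ) ≤ L ^ m * ((k:ℝ)+1) ^ m := by positivity
    have h4 : (0:ℝ) ≤ r ^ (k+1) := by positivity
    calc bcoef q α k * (L ^ m * ((k:ℝ)+1) ^ m) * r ^ (k+1)
        ≤ B * (L ^ m * ((k:ℝ)+1) ^ m) * r ^ (k+1) := by
          apply mul_le_mul_of_nonneg_right (mul_le_mul_of_nonneg_right h2 h3) h4
      _ = (B * L ^ m) * (((k:ℝ) + 1) ^ m * r ^ (k + 1)) := by ring

lemma summable_Gser {q α : ℝ} (hq0 : 0 < q) (hq1 : q < 1) (m : ℕ) {x : ℝ} (hx : 0 < x)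
    (hα : 2 * α ≤ 1) :
    Summable (fun k : ℕ => bcoef q α k * (((k : ℝ) + 1) * Real.log q) ^ m *
      Real.exp (((k : ℝ) + 1) * (Real.log q * x))) := by
  have := (summable_aux hq0 hq1 hα m hx).mul_left ((-1 : ℝ) ^ m)
  apply this.congr
  intro k
  rw [show (((k:ℝ) + 1) * -Real.log q) = -(((k:ℝ)+1) * Real.log q) by ring,
    neg_pow (((k:ℝ)+1) * Real.log q) m,
    show ∀ a b c : ℝ, (-1:ℝ)^m * (a * ((-1:ℝ)^m * b) * c) = ((-1:ℝ)^m*(-1:ℝ)^m) * (a*b*c)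
      from fun a b c => by ring,
    ← pow_add, Even.neg_one_pow ⟨m, rfl⟩, one_mul]

lemma hasDerivAt_Gser {q α : ℝ} (hq0 : 0 < q) (hq1 : q < 1) (m : ℕ) {x : ℝ} (hx : 0 < x)
    (hα : 2 * α ≤ 1) :
    HasDerivAt (Gser q α m) (Gser q α (m + 1) x) x := by
  have hlog : Real.log q < 0 := Real.log_neg hq0 hq1
  have hx2 : 0 < x / 2 := by linarith
  -- the bound
  set u : ℕ → ℝ := fun k => bcoef q α k * (((k : ℝ) + 1) * -Real.log q) ^ (m+1) *
      Real.exp (((k : ℝ) + 1) * (Real.log q * (x/2))) with hu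
  have husum : Summable u := summable_aux hq0 hq1 hα (m+1) hx2
  apply hasDerivAt_tsum_of_isPreconnected (t := Ioi (x/2)) husum isOpen_Ioi isPreconnected_Ioi
    (y₀ := x) (y := x) (g' := fun k y => bcoef q α k * (((k : ℝ) + 1) * Real.log q) ^ (m+1) *
      Real.exp (((k : ℝ) + 1) * (Real.log q * y)))
  · intro k y hy
    have hc : HasDerivAt (fun y : ℝ => Real.exp (((k : ℝ) + 1) * (Real.log q * y)))
        ((((k : ℝ) + 1) * Real.log q) * Real.exp (((k : ℝ) + 1) * (Real.log q * y))) y := by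
      have hinner : HasDerivAt (fun y : ℝ => ((k : ℝ) + 1) * (Real.log q * y))
          (((k : ℝ) + 1) * Real.log q) y := by
        simpa [mul_assoc] using (hasDerivAt_id y).const_mul (((k : ℝ) + 1) * Real.log q)
      simpa [mul_comm, Function.comp_def] using (Real.hasDerivAt_exp _).comp y hinner
    have := hc.const_mul (bcoef q α k * (((k : ℝ) + 1) * Real.log q) ^ m)
    refine this.congr_deriv ?_
    rw [pow_succ]
    ring
  · intro k y hy
    rw [Real.norm_eq_abs, abs_mul, abs_mul]
    have h1 := bcoef_nonneg hq0 hq1 hα k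
    have h2 : |bcoef q α k| = bcoef q α k := abs_of_nonneg h1
    have h3 : |(((k : ℝ) + 1) * Real.log q) ^ (m+1)| = (((k : ℝ) + 1) * -Real.log q) ^ (m+1) := by
      rw [abs_pow, abs_mul, abs_of_neg hlog, abs_of_pos (by positivity : (0:ℝ) < (k:ℝ)+1)]
    have h4 : |Real.exp (((k : ℝ) + 1) * (Real.log q * y))|
        ≤ Real.exp (((k : ℝ) + 1) * (Real.log q * (x/2))) := by
      rw [abs_of_pos (Real.exp_pos _), Real.exp_le_exp]
      have hy' : x / 2 ≤ y := le_of_lt hy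
      have : Real.log q * y ≤ Real.log q * (x/2) := by nlinarith
      nlinarith [this, (by positivity : (0:ℝ) < (k:ℝ)+1)]
    rw [h2, h3]
    have h5 : (0:ℝ) ≤ bcoef q α k * (((k : ℝ) + 1) * -Real.log q) ^ (m+1) := by
      have h6 : (0:ℝ) ≤ ((k : ℝ) + 1) * -Real.log q :=
        mul_nonneg (by positivity) (by linarith)
      exact mul_nonneg h1 (pow_nonneg h6 _)
    calc bcoef q α k * (((k : ℝ) + 1) * -Real.log q) ^ (m+1) *
        |Real.exp (((k : ℝ) + 1) * (Real.log q * y))|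
        ≤ bcoef q α k * (((k : ℝ) + 1) * -Real.log q) ^ (m+1) *
          Real.exp (((k : ℝ) + 1) * (Real.log q * (x/2))) := by
          exact mul_le_mul_of_nonneg_left h4 h5
      _ = u k := rfl
  · exact mem_Ioi.mpr (by linarith : x/2 < x)
  · exact summable_Gser hq0 hq1 m hx hα
  · exact mem_Ioi.mpr (by linarith : x/2 < x)

lemma neg_log_one_sub_le {a : ℝ} (h0 : 0 < a) (h1 : a < 1) :
    0 < -Real.log (1 - a) ∧ -Real.log (1 - a) ≤ a / (1 - a) := by
  have h2 : 0 < 1 - a := by linarith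
  constructor
  · have := Real.log_neg h2 (by linarith)
    linarith
  · have h3 : -Real.log (1 - a) = Real.log (1 - a)⁻¹ := (Real.log_inv _).symm
    rw [h3]
    have h4 := Real.log_le_sub_one_of_pos (inv_pos.mpr h2)
    have h5 : (1 - a)⁻¹ - 1 = a / (1 - a) := by field_simp; ring
    linarith

lemma rpow_nat_add {x : ℝ} (hq0 : 0 < q) (j : ℕ) :
    q ^ ((j : ℝ) + x) = q ^ (j + 1) * (q ^ x / q) := by
  rw [Real.rpow_add hq0, Real.rpow_natCast]
  field_simp
  ring

lemma rpow_add_pos_lt_one (hq0 : 0 < q) (hq1 : q < 1) (j : ℕ) {y : ℝ} (hy : 0 < y) :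
    0 < q ^ ((j : ℝ) + y) ∧ q ^ ((j : ℝ) + y) ≤ q ^ (j:ℕ) * q ^ y ∧ q ^ ((j : ℝ) + y) < 1 := by
  have h1 : q ^ ((j : ℝ) + y) = (q ^ (j:ℕ) : ℝ) * q ^ y := by
    rw [Real.rpow_add hq0, Real.rpow_natCast]
  refine ⟨by rw [h1]; positivity, le_of_eq h1, ?_⟩
  rw [h1]
  have h2 : q ^ (j:ℕ) ≤ 1 := pow_le_one₀ hq0.le hq1.le
  have h3 : q ^ y < 1 := Real.rpow_lt_one hq0.le hq1 hy
  nlinarith [pow_pos hq0 j, Real.rpow_pos_of_pos hq0 y]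

lemma Fterm_abs_le (hq0 : 0 < q) (hq1 : q < 1) (j : ℕ) {y : ℝ} (hy : 1 ≤ y) :
    |Fterm q j y| ≤ 2 / (1 - q) * q ^ (j:ℕ) := by
  have hq1' : 0 < 1 - q := by linarith
  have hj1 : 0 < q ^ (j+1) := pow_pos hq0 _
  have hj2 : q ^ (j+1) < 1 := pow_lt_one₀ hq0.le hq1 (Nat.succ_ne_zero j)
  have hy0 : 0 < y := by linarith
  obtain ⟨hr0, hrle, hr1⟩ := rpow_add_pos_lt_one hq0 hq1 j hy0
  obtain ⟨ha1, ha2⟩ := neg_log_one_sub_le hj1 hj2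
  obtain ⟨hb1, hb2⟩ := neg_log_one_sub_le hr0 hr1
  have hd1 : 1 - q ^ (j+1) ≥ 1 - q := by
    have : q ^ (j+1) ≤ q := by
      calc q ^ (j+1) ≤ q ^ 1 := pow_le_pow_of_le_one hq0.le hq1.le (by omega)
      _ = q := pow_one q
    linarith
  have hd2 : 1 - q ^ ((j:ℝ) + y) ≥ 1 - q := by
    have h2 : q ^ ((j:ℝ) + y) ≤ q := by
      calc q ^ ((j:ℝ) + y) ≤ q ^ (1:ℝ) :=
        Real.rpow_le_rpow_of_exponent_ge hq0 hq1.le (by linarith [Nat.cast_nonneg (α := ℝ) j])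
      _ = q := Real.rpow_one q
    linarith
  have e1 : -Real.log (1 - q ^ (j+1)) ≤ q ^ (j:ℕ) / (1 - q) := by
    have : q ^ (j+1) / (1 - q ^ (j+1)) ≤ q ^ (j:ℕ) / (1 - q) := by
      apply div_le_div₀ (by positivity) _ hq1' hd1
      calc q ^ (j+1) ≤ q ^ j * 1 := by rw [pow_succ]; nlinarith [pow_pos hq0 j]
      _ = q ^ j := mul_one _
    linarith
  have e2 : -Real.log (1 - q ^ ((j:ℝ) + y)) ≤ q ^ (j:ℕ) / (1 - q) := by
    have h3 : q ^ ((j:ℝ) + y) / (1 - q ^ ((j:ℝ) + y)) ≤ q ^ (j:ℕ) / (1 - q) := by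
      apply div_le_div₀ (by positivity) _ hq1' hd2
      have : q ^ y ≤ 1 := (Real.rpow_le_one hq0.le hq1.le hy0.le)
      nlinarith [pow_pos hq0 j]
    linarith
  have e3 : 2 / (1 - q) * q ^ (j:ℕ) = 2 * (q ^ (j:ℕ) / (1 - q)) := by ring
  rw [Fterm, abs_le]
  constructor <;> linarith

lemma summable_Fterm (hq0 : 0 < q) (hq1 : q < 1) {y : ℝ} (hy : 1 ≤ y) :
    Summable (fun j : ℕ => Fterm q j y) := by
  apply Summable.of_abs
  apply Summable.of_nonneg_of_le (fun j => abs_nonneg _)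
    (fun j => Fterm_abs_le hq0 hq1 j hy)
  exact (summable_geometric_of_lt_one hq0.le hq1).mul_left _

lemma tprod_eq_exp_tsum (hq0 : 0 < q) (hq1 : q < 1) {y : ℝ} (hy : 1 ≤ y) :
    (∏' j : ℕ, (1 - q ^ (j + 1)) / (1 - q ^ ((j : ℝ) + y)))
      = Real.exp (∑' j : ℕ, Fterm q j y) := by
  have hS := (summable_Fterm hq0 hq1 hy).hasSum
  have hP := hS.rexp
  have : (Real.exp ∘ fun j : ℕ => Fterm q j y)
      = fun j : ℕ => (1 - q ^ (j + 1)) / (1 - q ^ ((j : ℝ) + y)) := by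
    funext j
    have hj2 : q ^ (j+1) < 1 := pow_lt_one₀ hq0.le hq1 (Nat.succ_ne_zero j)
    obtain ⟨hr0, _, hr1⟩ := rpow_add_pos_lt_one hq0 hq1 j (by linarith : (0:ℝ) < y)
    simp only [Function.comp_apply, Fterm]
    rw [Real.exp_sub, Real.exp_log (by linarith), Real.exp_log (by linarith)]
  rw [this] at hP
  exact hP.tprod_eq

lemma hasDerivAt_Fterm (hq0 : 0 < q) (hq1 : q < 1) (j : ℕ) {y : ℝ} (hy : 0 < y) :
    HasDerivAt (fun z => Fterm q j z)
      (q ^ ((j : ℝ) + y) * Real.log q / (1 - q ^ ((j : ℝ) + y))) y := by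
  obtain ⟨hr0, _, hr1⟩ := rpow_add_pos_lt_one hq0 hq1 j hy
  have hinner : HasDerivAt (fun z : ℝ => (j : ℝ) + z) 1 y := (hasDerivAt_id y).const_add _
  have hpow : HasDerivAt (fun z : ℝ => q ^ ((j : ℝ) + z))
      (q ^ ((j : ℝ) + y) * Real.log q) y := by
    have := ((Real.hasStrictDerivAt_const_rpow hq0 ((j : ℝ) + y)).hasDerivAt).comp y hinner
    simpa [Function.comp_def] using this
  have hsub : HasDerivAt (fun z : ℝ => 1 - q ^ ((j : ℝ) + z))
      (-(q ^ ((j : ℝ) + y) * Real.log q)) y := hpow.const_sub 1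
  have hlog : HasDerivAt (fun z : ℝ => Real.log (1 - q ^ ((j : ℝ) + z)))
      (-(q ^ ((j : ℝ) + y) * Real.log q) / (1 - q ^ ((j : ℝ) + y))) y :=
    hsub.log (by linarith)
  have := hlog.const_sub (Real.log (1 - q ^ (j + 1)))
  refine this.congr_deriv ?_
  ring

lemma hasDerivAt_tsum_Fterm (hq0 : 0 < q) (hq1 : q < 1) {y : ℝ} (hy : 1 < y) :
    HasDerivAt (fun z => ∑' j : ℕ, Fterm q j z)
      (∑' j : ℕ, q ^ ((j : ℝ) + y) * Real.log q / (1 - q ^ ((j : ℝ) + y))) y := by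
  have hq1' : 0 < 1 - q := by linarith
  have hlogq : Real.log q < 0 := Real.log_neg hq0 hq1
  set u : ℕ → ℝ := fun j => q ^ (j:ℕ) * (q * -Real.log q / (1 - q)) with hu
  have husum : Summable u :=
    (summable_geometric_of_lt_one hq0.le hq1).mul_right _
  apply hasDerivAt_tsum_of_isPreconnected (t := Ioi 1) husum isOpen_Ioi isPreconnected_Ioi
    (y₀ := y) (y := y)
    (g' := fun (j : ℕ) (z : ℝ) => q ^ ((j : ℝ) + z) * Real.log q / (1 - q ^ ((j : ℝ) + z)))
  · intro j z hz
    exact hasDerivAt_Fterm hq0 hq1 j (by simp at hz; linarith)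
  · intro j z hz
    simp only [mem_Ioi] at hz
    obtain ⟨hr0, hrle, hr1⟩ := rpow_add_pos_lt_one hq0 hq1 j (by linarith : (0:ℝ) < z)
    have hd : 1 - q ^ ((j:ℝ) + z) ≥ 1 - q := by
      have h2 : q ^ ((j:ℝ) + z) ≤ q := by
        calc q ^ ((j:ℝ) + z) ≤ q ^ (1:ℝ) :=
          Real.rpow_le_rpow_of_exponent_ge hq0 hq1.le (by linarith [Nat.cast_nonneg (α := ℝ) j])
        _ = q := Real.rpow_one q
      linarith
    have hnum : q ^ ((j:ℝ) + z) ≤ q ^ (j:ℕ) * q := by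
      have h3 : q ^ z ≤ q ^ (1:ℝ) :=
        Real.rpow_le_rpow_of_exponent_ge hq0 hq1.le hz.le
      rw [Real.rpow_one] at h3
      calc q ^ ((j:ℝ) + z) ≤ q ^ (j:ℕ) * q ^ z := hrle
      _ ≤ q ^ (j:ℕ) * q := by nlinarith [pow_pos hq0 j]
    rw [Real.norm_eq_abs, abs_div, abs_mul, abs_of_pos hr0, abs_of_neg hlogq,
      abs_of_pos (by linarith : (0:ℝ) < 1 - q ^ ((j:ℝ) + z)), hu]
    show q ^ ((j:ℝ) + z) * -Real.log q / (1 - q ^ ((j:ℝ) + z)) ≤ q ^ (j:ℕ) * (q * -Real.log q / (1 - q))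
    rw [show q ^ (j:ℕ) * (q * -Real.log q / (1 - q)) = q ^ (j:ℕ) * q * -Real.log q / (1-q) by ring]
    apply div_le_div₀ _ _ hq1' hd
    · exact mul_nonneg (by positivity) (by linarith)
    · apply mul_le_mul_of_nonneg_right hnum (by linarith)
  · exact mem_Ioi.mpr hy
  · exact summable_Fterm hq0 hq1 hy.le
  · exact mem_Ioi.mpr hy

lemma measurable_integrand : Measurable (fun t : ℝ => Real.log (1 - t) / t) :=
  (Real.measurable_log.comp (measurable_const.sub measurable_id)).div measurable_id

lemma intervalIntegrable_log_div {z : ℝ} (hz0 : 0 < z) (hz1 : z < 1) :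
    IntervalIntegrable (fun t : ℝ => Real.log (1 - t) / t) volume 0 z := by
  rw [intervalIntegrable_iff_integrableOn_Ioc_of_le hz0.le]
  apply Integrable.mono' (g := fun _ : ℝ => 1 / (1 - z))
  · exact integrable_const _
  · exact measurable_integrand.aestronglyMeasurable
  · filter_upwards [ae_restrict_mem measurableSet_Ioc] with t ht
    obtain ⟨ht0, htz⟩ := ht
    have h1t : 0 < 1 - t := by linarith
    have h1 : |Real.log (1 - t)| ≤ t / (1 - t) := by
      rw [abs_of_nonpos (Real.log_nonpos (by linarith) (by linarith))]
      have h3 : -Real.log (1 - t) = Real.log (1 - t)⁻¹ := (Real.log_inv _).symm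
      rw [h3]
      have h4 := Real.log_le_sub_one_of_pos (inv_pos.mpr h1t)
      have h5 : (1 - t)⁻¹ - 1 = t / (1 - t) := by field_simp; ring
      linarith
    rw [norm_div, Real.norm_eq_abs, Real.norm_eq_abs, abs_of_pos ht0]
    rw [div_le_div_iff₀ ht0 (by linarith : (0:ℝ) < 1 - z)]
    have h2 : |Real.log (1 - t)| * (1 - t) ≤ t := by
      rw [← le_div_iff₀ h1t]; exact h1
    nlinarith [abs_nonneg (Real.log (1 - t))]

lemma hasDerivAt_dilog {z : ℝ} (hz0 : 0 < z) (hz1 : z < 1) :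
    HasDerivAt dilog (-(Real.log (1 - z) / z)) z := by
  have h1 : HasDerivAt (fun u : ℝ => ∫ t in (0:ℝ)..u, Real.log (1 - t) / t)
      (Real.log (1 - z) / z) z := by
    apply integral_hasDerivAt_right (intervalIntegrable_log_div hz0 hz1)
    · exact ⟨univ, Filter.univ_mem, measurable_integrand.aestronglyMeasurable.restrict⟩
    · apply ContinuousAt.div
      · exact (Real.continuousAt_log (by linarith)).comp
          ((continuous_const.sub continuous_id).continuousAt)
      · exact continuousAt_id
      · exact ne_of_gt hz0
  exact h1.neg

lemma hasDerivAt_dilog_comp {q x : ℝ} (hq0 : 0 < q) (hq1 : q < 1) (hx : 0 < x) :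
    HasDerivAt (fun t : ℝ => -dilog (1 - q ^ t) / Real.log q)
      (-(x * Real.log q * q ^ x / (1 - q ^ x))) x := by
  have hlogq : Real.log q < 0 := Real.log_neg hq0 hq1
  have hQ0 : 0 < q ^ x := Real.rpow_pos_of_pos hq0 x
  have hQ1 : q ^ x < 1 := Real.rpow_lt_one hq0.le hq1 hx
  have hz0 : 0 < 1 - q ^ x := by linarith
  have hz1 : 1 - q ^ x < 1 := by linarith
  have hinner : HasDerivAt (fun t : ℝ => 1 - q ^ t) (-(q ^ x * Real.log q)) x := by
    exact ((Real.hasStrictDerivAt_const_rpow hq0 x).hasDerivAt).const_sub 1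
  have hcomp := (hasDerivAt_dilog hz0 hz1).comp x hinner
  have := (hcomp.neg).div_const (Real.log q)
  refine this.congr_deriv ?_
  symm
  have hlog1 : Real.log (1 - (1 - q ^ x)) = x * Real.log q := by
    rw [show (1 - (1 - q ^ x)) = q ^ x by ring, Real.log_rpow hq0]
  rw [hlog1]
  have hne : Real.log q ≠ 0 := ne_of_lt hlogq
  have hne2 : (1 - q ^ x) ≠ 0 := ne_of_gt hz0
  field_simp

lemma hasSum_geom_succ {ρ : ℝ} (h0 : 0 ≤ ρ) (h1 : ρ < 1) :
    HasSum (fun k : ℕ => ρ ^ (k + 1)) (ρ / (1 - ρ)) := by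
  have h := (hasSum_geometric_of_lt_one h0 h1).mul_left ρ
  rw [← div_eq_mul_inv] at h
  have h2 : (fun i : ℕ => ρ * ρ ^ i) = fun k : ℕ => ρ ^ (k + 1) := by
    funext k; rw [pow_succ]; ring
  rwa [h2] at h

lemma summable_Sk (hq0 : 0 < q) (hq1 : q < 1) {r : ℝ} (hr0 : 0 < r) (hr1 : r < 1) :
    Summable (fun k : ℕ => q ^ (k + 1) / (1 - q ^ (k + 1)) * r ^ (k + 1)) := by
  have hq1' : 0 < 1 - q := by linarith
  refine Summable.of_nonneg_of_le (fun k => ?_) (fun k => ?_)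
    (((hasSum_geom_succ hr0.le hr1).summable).mul_left (q / (1 - q)))
  · have h1 : 0 < q ^ (k+1) := pow_pos hq0 _
    have h2 : q ^ (k+1) < 1 := pow_lt_one₀ hq0.le hq1 (Nat.succ_ne_zero k)
    have h3 : (0:ℝ) < 1 - q ^ (k+1) := by linarith
    positivity
  · have h1 : 0 < q ^ (k+1) := pow_pos hq0 _
    have h2 : q ^ (k+1) < 1 := pow_lt_one₀ hq0.le hq1 (Nat.succ_ne_zero k)
    have h3 : (0:ℝ) < 1 - q ^ (k+1) := by linarith
    have h4a : q ^ (k+1) ≤ q := by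
      calc q ^ (k+1) ≤ q ^ 1 := pow_le_pow_of_le_one hq0.le hq1.le (by omega)
      _ = q := pow_one q
    have h4 : q ^ (k+1) / (1 - q ^ (k+1)) ≤ q / (1 - q) :=
      div_le_div₀ hq0.le h4a hq1' (by linarith)
    exact mul_le_mul_of_nonneg_right h4 (by positivity)

lemma tsum_swap_eq (hq0 : 0 < q) (hq1 : q < 1) {x : ℝ} (hx : 0 < x) :
    (∑' j : ℕ, q ^ ((j : ℝ) + (x + 1)) / (1 - q ^ ((j : ℝ) + (x + 1))))
      = ∑' k : ℕ, q ^ (k + 1) / (1 - q ^ (k + 1)) * (q ^ x) ^ (k + 1) := by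
  set r : ℝ := q ^ x with hrdef
  have hr0 : 0 < r := Real.rpow_pos_of_pos hq0 x
  have hr1 : r < 1 := Real.rpow_lt_one hq0.le hq1 hx
  have hrho : ∀ j : ℕ, 0 < q ^ (j+1) * r ∧ q ^ (j+1) * r < 1 := by
    intro j
    have h1 : 0 < q ^ (j+1) := pow_pos hq0 _
    have h2 : q ^ (j+1) ≤ 1 := pow_le_one₀ hq0.le hq1.le
    exact ⟨by positivity, by nlinarith⟩
  have hexp : ∀ j : ℕ, q ^ ((j : ℝ) + (x + 1)) = q ^ (j + 1) * r := by
    intro j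
    rw [show ((j : ℝ) + (x + 1)) = ((j + 1 : ℕ) : ℝ) + x by push_cast; ring,
      Real.rpow_add hq0, Real.rpow_natCast]
  have f1 : ∀ j : ℕ, HasSum (fun k : ℕ => (q ^ (j + 1) * r) ^ (k + 1))
      (q ^ ((j : ℝ) + (x + 1)) / (1 - q ^ ((j : ℝ) + (x + 1)))) := by
    intro j
    rw [hexp j]
    exact hasSum_geom_succ (hrho j).1.le (hrho j).2
  have f2 : ∀ k : ℕ, HasSum (fun j : ℕ => (q ^ (j + 1) * r) ^ (k + 1))
      (q ^ (k + 1) / (1 - q ^ (k + 1)) * r ^ (k + 1)) := by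
    intro k
    have h1 : 0 < q ^ (k+1) := pow_pos hq0 _
    have h2 : q ^ (k+1) < 1 := pow_lt_one₀ hq0.le hq1 (Nat.succ_ne_zero k)
    have h := (hasSum_geom_succ (le_of_lt h1) h2).mul_right (r ^ (k + 1))
    have heq : (fun i : ℕ => (q ^ (k+1)) ^ (i+1) * r ^ (k+1))
        = fun j : ℕ => (q ^ (j+1) * r) ^ (k+1) := by
      funext j; rw [mul_pow, ← pow_mul, ← pow_mul, Nat.mul_comm]
    rwa [heq] at h
  have hA : Summable (Function.uncurry fun j k : ℕ => (q ^ (j + 1) * r) ^ (k + 1)) := by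
    refine Summable.of_nonneg_of_le (fun p => ?_) (fun p => ?_)
      (Summable.mul_of_nonneg
        (f := fun j : ℕ => q ^ (j+1)) (g := fun k : ℕ => r ^ (k+1))
        ((summable_geometric_of_lt_one hq0.le hq1).mul_left q |>.congr
          (fun j => by rw [pow_succ]; ring))
        ((summable_geometric_of_lt_one hr0.le hr1).mul_left r |>.congr
          (fun k => by rw [pow_succ]; ring))
        (fun j => by positivity) (fun k => by positivity))
    · have := (hrho p.1).1
      simp only [Function.uncurry]
      positivity
    · simp only [Function.uncurry]
      rw [mul_pow]
      have h1 : 0 < q ^ (p.1+1) := pow_pos hq0 _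
      have h2 : q ^ (p.1+1) ≤ 1 := pow_le_one₀ hq0.le hq1.le
      have h3 : (q ^ (p.1+1)) ^ (p.2+1) ≤ q ^ (p.1 + 1) :=
        pow_le_of_le_one h1.le h2 (Nat.succ_ne_zero _)
      exact mul_le_mul_of_nonneg_right h3 (by positivity)
  calc (∑' j : ℕ, q ^ ((j : ℝ) + (x + 1)) / (1 - q ^ ((j : ℝ) + (x + 1))))
      = ∑' (j : ℕ) (k : ℕ), (q ^ (j + 1) * r) ^ (k + 1) :=
        tsum_congr fun j => (f1 j).tsum_eq.symm
    _ = ∑' (k : ℕ) (j : ℕ), (q ^ (j + 1) * r) ^ (k + 1) :=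
        (Summable.tsum_comm' hA (fun j => (f1 j).summable) (fun k => (f2 k).summable)).symm
    _ = ∑' k : ℕ, q ^ (k + 1) / (1 - q ^ (k + 1)) * r ^ (k + 1) :=
        tsum_congr fun k => (f2 k).tsum_eq

lemma Dval_eq (hq0 : 0 < q) (hq1 : q < 1) {α x : ℝ} (hx : 0 < x) :
    -Real.log (1 - q)
      + (∑' j : ℕ, q ^ ((j : ℝ) + (x + 1)) * Real.log q / (1 - q ^ ((j : ℝ) + (x + 1))))
      + -(x * Real.log q * q ^ x / (1 - q ^ x))
      - (1 * (Real.log (1 - q ^ x) - Real.log (1 - q))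
         + (x + 1 - α) * (-(q ^ x * Real.log q) / (1 - q ^ x)))
      = -Gser q α 0 x := by
  set r : ℝ := q ^ x with hrdef
  have hr0 : 0 < r := Real.rpow_pos_of_pos hq0 x
  have hr1 : r < 1 := Real.rpow_lt_one hq0.le hq1 hx
  have h1r : (0:ℝ) < 1 - r := by linarith
  -- rewrite the j-sum
  have hsplit : (∑' j : ℕ, q ^ ((j : ℝ) + (x + 1)) * Real.log q / (1 - q ^ ((j : ℝ) + (x + 1))))
      = (∑' j : ℕ, q ^ ((j : ℝ) + (x + 1)) / (1 - q ^ ((j : ℝ) + (x + 1)))) * Real.log q := by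
    rw [← tsum_mul_right]
    exact tsum_congr fun j => by ring
  set T : ℝ := ∑' k : ℕ, q ^ (k + 1) / (1 - q ^ (k + 1)) * r ^ (k + 1) with hT
  have H1 : HasSum (fun k : ℕ => q ^ (k + 1) / (1 - q ^ (k + 1)) * r ^ (k + 1)) T :=
    (summable_Sk hq0 hq1 hr0 hr1).hasSum
  have H2 : HasSum (fun k : ℕ => r ^ (k + 1)) (r / (1 - r)) := hasSum_geom_succ hr0.le hr1
  have H3 : HasSum (fun k : ℕ => r ^ (k + 1) / ((k : ℝ) + 1)) (-Real.log (1 - r)) :=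
    Real.hasSum_pow_div_log_of_abs_lt_one (by rw [abs_of_pos hr0]; exact hr1)
  have Htot := (H1.mul_left (Real.log q)).add
    ((H2.mul_left ((1 - α) * Real.log q)).add H3)
  have hfun : (fun k : ℕ => Real.log q * (q ^ (k + 1) / (1 - q ^ (k + 1)) * r ^ (k + 1))
      + ((1 - α) * Real.log q * r ^ (k + 1) + r ^ (k + 1) / ((k : ℝ) + 1)))
      = fun k : ℕ => -(bcoef q α k * (((k : ℝ) + 1) * Real.log q) ^ 0 *
          Real.exp (((k : ℝ) + 1) * (Real.log q * x))) := by
    funext k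
    rw [exp_pow_eq k, show Real.exp (Real.log q * x) = r by
      rw [hrdef, Real.rpow_def_of_pos hq0], bcoef, pow_zero]
    have hk : ((k : ℝ) + 1) ≠ 0 := by positivity
    field_simp
    ring
  rw [hfun] at Htot
  have hGser : -Gser q α 0 x = Real.log q * T
      + ((1 - α) * Real.log q * (r / (1 - r)) + -Real.log (1 - r)) := by
    rw [Gser, ← tsum_neg]
    exact Htot.tsum_eq
  rw [hsplit, tsum_swap_eq hq0 hq1 hx, ← hT, hGser]
  field_simp
  ring

lemma log_qf_eq (hq0 : 0 < q) (hq1 : q < 1) {t : ℝ} (ht : 0 < t) :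
    Real.log (qf α 1 q t)
      = (1 - (t + 1)) * Real.log (1 - q) + (∑' j : ℕ, Fterm q j (t + 1))
        + (-dilog (1 - q ^ t) / Real.log q)
        - ((t + 1 - α) * (Real.log (1 - q ^ t) - Real.log (1 - q))) := by
  have hq1' : (0:ℝ) < 1 - q := by linarith
  have hQ0 : 0 < q ^ t := Real.rpow_pos_of_pos hq0 t
  have hQ1 : q ^ t < 1 := Real.rpow_lt_one hq0.le hq1 ht
  have h1Q : (0:ℝ) < 1 - q ^ t := by linarith
  have hG : (0:ℝ) < (1 - q) ^ (1 - (t + 1)) := Real.rpow_pos_of_pos hq1' _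
  have hR : (0:ℝ) < ((1 - q ^ t) / (1 - q)) ^ (t + 1 - α) :=
    Real.rpow_pos_of_pos (div_pos h1Q hq1') _
  have hP := tprod_eq_exp_tsum (q := q) hq0 hq1 (by linarith : (1:ℝ) ≤ t + 1)
  rw [qf, qGamma, hP]
  rw [Real.log_div (by positivity) (ne_of_gt hR)]
  rw [Real.log_mul (by positivity) (Real.exp_ne_zero _)]
  rw [Real.log_mul (ne_of_gt hG) (Real.exp_ne_zero _)]
  rw [Real.log_exp, Real.log_exp, Real.log_rpow hq1',
    Real.log_rpow (div_pos h1Q hq1'), Real.log_div (ne_of_gt h1Q) (ne_of_gt hq1')]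

lemma hasDerivAt_log_qf (hq0 : 0 < q) (hq1 : q < 1) (hα : 2 * α ≤ 1) {x : ℝ} (hx : 0 < x) :
    HasDerivAt (fun t => Real.log (qf α 1 q t)) (-Gser q α 0 x) x := by
  have hq1' : (0:ℝ) < 1 - q := by linarith
  have hQ0 : 0 < q ^ x := Real.rpow_pos_of_pos hq0 x
  have hQ1 : q ^ x < 1 := Real.rpow_lt_one hq0.le hq1 hx
  have h1Q : (0:ℝ) < 1 - q ^ x := by linarith
  -- piece 1
  have p1 : HasDerivAt (fun t : ℝ => (1 - (t + 1)) * Real.log (1 - q))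
      ((-1) * Real.log (1 - q)) x :=
    (((hasDerivAt_id x).add_const 1).const_sub 1).mul_const _
  -- piece 2
  have p2 : HasDerivAt (fun t : ℝ => ∑' j : ℕ, Fterm q j (t + 1))
      ((∑' j : ℕ, q ^ ((j : ℝ) + (x + 1)) * Real.log q / (1 - q ^ ((j : ℝ) + (x + 1)))) * 1)
      x := by
    have h := (hasDerivAt_tsum_Fterm hq0 hq1 (by linarith : (1:ℝ) < x + 1)).comp x
      ((hasDerivAt_id x).add_const 1)
    exact h
  -- piece 3
  have p3 := hasDerivAt_dilog_comp hq0 hq1 hx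
  -- piece 4
  have hv : HasDerivAt (fun t : ℝ => Real.log (1 - q ^ t) - Real.log (1 - q))
      (-(q ^ x * Real.log q) / (1 - q ^ x)) x := by
    have h1 : HasDerivAt (fun t : ℝ => (1:ℝ) - q ^ t) (-(q ^ x * Real.log q)) x :=
      ((Real.hasStrictDerivAt_const_rpow hq0 x).hasDerivAt).const_sub 1
    exact (h1.log (ne_of_gt h1Q)).sub_const _
  have hu : HasDerivAt (fun t : ℝ => t + 1 - α) 1 x :=
    ((hasDerivAt_id x).add_const 1).sub_const α
  have p4 := hu.mul hv
  have hA := ((p1.add p2).add p3).sub p4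
  have hval : (-1) * Real.log (1 - q)
      + (∑' j : ℕ, q ^ ((j : ℝ) + (x + 1)) * Real.log q / (1 - q ^ ((j : ℝ) + (x + 1)))) * 1
      + -(x * Real.log q * q ^ x / (1 - q ^ x))
      - (1 * (Real.log (1 - q ^ x) - Real.log (1 - q))
         + (x + 1 - α) * (-(q ^ x * Real.log q) / (1 - q ^ x)))
      = -Gser q α 0 x := by
    rw [← Dval_eq hq0 hq1 hx]
    ring
  rw [hval] at hA
  apply hA.congr_of_eventuallyEq
  filter_upwards [IsOpen.mem_nhds isOpen_Ioi hx] with t ht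
  exact log_qf_eq hq0 hq1 ht

end Aux

/-- If `0 < q < 1` and `2α ≤ 1`, then `f_{α,1}(·;q)` is logarithmically completely
monotonic on `(0,∞)`: for every `n ≥ 1` and `x > 0`,
`(−1)^n (log f_{α,1}(·;q))^{(n)}(x) ≥ 0`. -/
theorem logCompletelyMonotonic_qf_of_two_alpha_le_one
    (q α : ℝ) (hq0 : 0 < q) (hq1 : q < 1) (hα : 2 * α ≤ 1) :
    ∀ n : ℕ, 1 ≤ n → ∀ x : ℝ, 0 < x →
      0 ≤ (-1 : ℝ) ^ n * iteratedDeriv n (fun t => Real.log (qf α 1 q t)) x := by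
  intro n hn x hx
  have hlogq : Real.log q < 0 := Real.log_neg hq0 hq1
  -- iterated derivatives of Gser
  have hG : ∀ m : ℕ, ∀ y : ℝ, 0 < y →
      iteratedDeriv m (fun t => -Gser q α 0 t) y = -Gser q α m y := by
    intro m
    induction m with
    | zero => intro y hy; simp [iteratedDeriv_zero]
    | succ m ih =>
      intro y hy
      rw [iteratedDeriv_succ]
      have hev : iteratedDeriv m (fun t => -Gser q α 0 t) =ᶠ[𝓝 y]
          (fun t => -Gser q α m t) := by
        filter_upwards [IsOpen.mem_nhds isOpen_Ioi hy] with t ht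
        exact ih t ht
      rw [hev.deriv_eq]
      exact (((hasDerivAt_Gser hq0 hq1 m hy hα).neg).deriv)
  -- rewrite iteratedDeriv n via the derivative
  obtain ⟨m, rfl⟩ : ∃ m, n = m + 1 := ⟨n - 1, (Nat.succ_pred_eq_of_pos hn).symm⟩
  rw [iteratedDeriv_succ']
  have hev : deriv (fun t => Real.log (qf α 1 q t)) =ᶠ[𝓝 x]
      (fun t => -Gser q α 0 t) := by
    filter_upwards [IsOpen.mem_nhds isOpen_Ioi hx] with t ht
    exact (hasDerivAt_log_qf hq0 hq1 hα ht).deriv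
  rw [hev.iteratedDeriv_eq, hG m x hx, Gser, ← tsum_neg, ← tsum_mul_left]
  apply tsum_nonneg
  intro k
  have hb := bcoef_nonneg hq0 hq1 hα k
  have hkL : (0:ℝ) ≤ ((k:ℝ) + 1) * -Real.log q := by
    have : (0:ℝ) < (k:ℝ) + 1 := by positivity
    nlinarith
  have hrw : (-1:ℝ)^(m+1) * -(bcoef q α k * (((k:ℝ)+1) * Real.log q)^m *
      Real.exp (((k : ℝ) + 1) * (Real.log q * x)))
      = bcoef q α k * ((((k:ℝ)+1) * -Real.log q)^m) *
      Real.exp (((k : ℝ) + 1) * (Real.log q * x)) := by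
    rw [show (((k:ℝ)+1) * -Real.log q) = -(((k:ℝ)+1) * Real.log q) by ring,
      neg_pow (((k:ℝ)+1) * Real.log q) m, pow_succ]
    ring
  rw [hrw]
  exact mul_nonneg (mul_nonneg hb (pow_nonneg hkL m)) (Real.exp_pos _).le
end

section
/- Let 0<q<1 and let α, β be real numbers with 2α≤1≤β. Then for every x>0, the second derivative of log f_{α,β}(·;q) at x equals ψ_q'(x+β) + (β−α)(log q)² q^x/(1−q^x)² + (log q) q^x/(1−q^x), and this equals the sum of the convergent series Σ_{k=1}^{∞} (log q)·q^{kx}/(1−q^k) · Φ_{α,β}(q^k), where Φ_{α,β}(y) = y^β log y + (β−α)(1−y) log y + (1−y). -/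
/-- The `q`-digamma function for `0 < q < 1`:
`ψ_q(x) = −log(1−q) + log q · Σ_{k=1}^∞ q^{kx}/(1−q^k)`. -/
noncomputable def qDigamma (q x : ℝ) : ℝ :=
  -Real.log (1 - q) + Real.log q * ∑' k : ℕ, q ^ (((k : ℝ) + 1) * x) / (1 - q ^ (k + 1))

/-- The auxiliary function `Φ_{α,β}(y) = y^β log y + (β−α)(1−y) log y + (1−y)`. -/
noncomputable def Phi (α β y : ℝ) : ℝ :=
  y ^ β * Real.log y + (β - α) * (1 - y) * Real.log y + (1 - y)

section
open Real Filter Set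

namespace QFA

variable {q : ℝ}

lemma qpos (hq0 : 0 < q) (s : ℝ) : 0 < q ^ s := Real.rpow_pos_of_pos hq0 s

lemma qlt1 (hq0 : 0 < q) (hq1 : q < 1) {s : ℝ} (hs : 0 < s) : q ^ s < 1 :=
  Real.rpow_lt_one hq0.le hq1 hs

lemma one_sub_qpow_pos (hq0 : 0 < q) (hq1 : q < 1) {s : ℝ} (hs : 0 < s) : 0 < 1 - q ^ s :=
  sub_pos.2 (qlt1 hq0 hq1 hs)

lemma qpow_mul (hq0 : 0 < q) (x : ℝ) (k : ℕ) : q ^ (((k : ℝ) + 1) * x) = (q ^ x) ^ (k + 1) := by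
  rw [← Real.rpow_natCast (q ^ x) (k + 1), ← Real.rpow_mul hq0.le]
  push_cast
  ring_nf

lemma npow_eq_rpow (hq0 : 0 < q) (k : ℕ) : q ^ (k + 1) = q ^ ((k : ℝ) + 1) := by
  rw [← Real.rpow_natCast q (k + 1)]; push_cast; ring_nf

/-- geometric sum, shifted -/
lemma hasSum_geom1 {r : ℝ} (h0 : 0 ≤ r) (h1 : r < 1) :
    HasSum (fun k : ℕ => r ^ (k + 1)) (r / (1 - r)) := by
  have := hasSum_geometric_of_lt_one h0 h1
  have h2 := this.mul_left r
  simpa [pow_succ, mul_comm, div_eq_mul_inv] using h2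

lemma hasSum_geom2 {r : ℝ} (h0 : 0 ≤ r) (h1 : r < 1) :
    HasSum (fun k : ℕ => ((k : ℝ) + 1) * r ^ (k + 1)) (r / (1 - r) ^ 2) := by
  have hs : HasSum (fun n : ℕ => (n : ℝ) * r ^ n) (r / (1 - r) ^ 2) := by
    have : ‖r‖ < 1 := by rwa [Real.norm_eq_abs, abs_of_nonneg h0]
    exact hasSum_coe_mul_geometric_of_norm_lt_one this
  have h2 : HasSum (fun n : ℕ => ((n + 1 : ℕ) : ℝ) * r ^ (n + 1))
      (r / (1 - r) ^ 2 - ∑ i ∈ Finset.range 1, (i : ℝ) * r ^ i) :=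
    (hasSum_nat_add_iff' (f := fun n : ℕ => (n : ℝ) * r ^ n) 1).2 hs
  simp only [Finset.range_one, Finset.sum_singleton, Nat.cast_zero, zero_mul, sub_zero] at h2
  convert h2 using 2 with k
  push_cast; ring


lemma one_sub_npow_pos (hq0 : 0 < q) (hq1 : q < 1) (k : ℕ) : 0 < 1 - q ^ (k + 1) :=
  sub_pos.2 (pow_lt_one₀ hq0.le hq1 k.succ_ne_zero)

lemma one_sub_npow_ge (hq0 : 0 < q) (hq1 : q < 1) (k : ℕ) : 1 - q ≤ 1 - q ^ (k + 1) := by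
  have h : q ^ (k + 1) ≤ q ^ 1 := pow_le_pow_of_le_one hq0.le hq1.le (by omega)
  rw [pow_one] at h; linarith

lemma hasDerivAt_qexp (hq0 : 0 < q) (c t : ℝ) :
    HasDerivAt (fun u => q ^ (c * u)) (c * Real.log q * q ^ (c * t)) t := by
  have h1 := (Real.hasStrictDerivAt_const_rpow hq0 (c * t)).hasDerivAt
  have h2 : HasDerivAt (fun u : ℝ => c * u) c t := by
    simpa using (hasDerivAt_id t).const_mul c
  have h3 := h1.comp t h2
  simp only [Function.comp_def] at h3
  refine h3.congr_deriv ?_; ring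

lemma hasDerivAt_qshift (hq0 : 0 < q) (c t : ℝ) :
    HasDerivAt (fun u => q ^ (c + u)) (q ^ (c + t) * Real.log q) t := by
  have h1 := (Real.hasStrictDerivAt_const_rpow hq0 (c + t)).hasDerivAt
  have h2 : HasDerivAt (fun u : ℝ => c + u) 1 t := by
    simpa using (hasDerivAt_id t).const_add c
  have h3 := h1.comp t h2
  simp only [Function.comp_def] at h3
  refine h3.congr_deriv ?_; ring

lemma summable_D (hq0 : 0 < q) (hq1 : q < 1) {t : ℝ} (ht : 0 < t) :
    Summable (fun k : ℕ => q ^ (((k : ℝ) + 1) * t) / (1 - q ^ (k + 1))) := by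
  refine Summable.of_nonneg_of_le (f := fun k : ℕ => (q ^ t) ^ (k + 1) * (1 - q)⁻¹)
    (fun k => div_nonneg (qpos hq0 _).le (one_sub_npow_pos hq0 hq1 k).le)
    (fun k => ?_)
    (((hasSum_geom1 (qpos hq0 t).le (qlt1 hq0 hq1 ht)).summable).mul_right (1 - q)⁻¹)
  rw [qpow_mul hq0 t k, div_eq_mul_inv]
  exact mul_le_mul_of_nonneg_left
    (inv_anti₀ (sub_pos.2 hq1) (one_sub_npow_ge hq0 hq1 k))
    (pow_nonneg (qpos hq0 t).le _)

lemma summable_D2 (hq0 : 0 < q) (hq1 : q < 1) {t : ℝ} (ht : 0 < t) :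
    Summable (fun k : ℕ => ((k : ℝ) + 1) * q ^ (((k : ℝ) + 1) * t) / (1 - q ^ (k + 1))) := by
  refine Summable.of_nonneg_of_le
    (f := fun k : ℕ => (((k : ℝ) + 1) * (q ^ t) ^ (k + 1)) * (1 - q)⁻¹)
    (fun k => div_nonneg (mul_nonneg (by positivity) (qpos hq0 _).le)
      (one_sub_npow_pos hq0 hq1 k).le)
    (fun k => ?_)
    (((hasSum_geom2 (qpos hq0 t).le (qlt1 hq0 hq1 ht)).summable).mul_right (1 - q)⁻¹)
  rw [qpow_mul hq0 t k, div_eq_mul_inv]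
  exact mul_le_mul_of_nonneg_left
    (inv_anti₀ (sub_pos.2 hq1) (one_sub_npow_ge hq0 hq1 k))
    (mul_nonneg (by positivity) (pow_nonneg (qpos hq0 t).le _))


lemma rpow_le_rpow_exp (hq0 : 0 < q) (hq1 : q < 1) {a b : ℝ} (hab : a ≤ b) : q ^ b ≤ q ^ a :=
  Real.rpow_le_rpow_of_exponent_ge hq0 hq1.le hab

lemma hasDerivAt_Dsum (hq0 : 0 < q) (hq1 : q < 1) {x : ℝ} (hx : 0 < x) :
    HasDerivAt (fun t => ∑' k : ℕ, q ^ (((k : ℝ) + 1) * t) / (1 - q ^ (k + 1)))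
      (∑' k : ℕ, ((k : ℝ) + 1) * Real.log q * q ^ (((k : ℝ) + 1) * x) / (1 - q ^ (k + 1))) x := by
  have hx2 : (0:ℝ) < x / 2 := by linarith
  refine hasDerivAt_tsum_of_isPreconnected
    (u := fun k : ℕ => (((k : ℝ) + 1) * (q ^ (x / 2)) ^ (k + 1)) * (|Real.log q| / (1 - q)))
    (g := fun k t => q ^ (((k : ℝ) + 1) * t) / (1 - q ^ (k + 1)))
    (g' := fun k t => ((k : ℝ) + 1) * Real.log q * q ^ (((k : ℝ) + 1) * t) / (1 - q ^ (k + 1)))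
    (t := Set.Ioi (x / 2))
    (((hasSum_geom2 (qpos hq0 (x / 2)).le (qlt1 hq0 hq1 hx2)).summable).mul_right _)
    isOpen_Ioi isPreconnected_Ioi
    (fun k y _ => ((hasDerivAt_qexp hq0 ((k : ℝ) + 1) y).div_const _))
    (fun k y hy => ?_) (mem_Ioi.2 (by linarith)) (summable_D hq0 hq1 hx) (mem_Ioi.2 (by linarith))
  have hy2 : x / 2 ≤ y := (mem_Ioi.1 hy).le
  have h1 : q ^ (((k : ℝ) + 1) * y) ≤ (q ^ (x / 2)) ^ (k + 1) := by
    rw [← qpow_mul hq0 (x / 2) k]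
    exact rpow_le_rpow_exp hq0 hq1 (by nlinarith [Nat.cast_nonneg (α := ℝ) k])
  have h2 : (1 - q ^ (k + 1))⁻¹ ≤ (1 - q)⁻¹ :=
    inv_anti₀ (sub_pos.2 hq1) (one_sub_npow_ge hq0 hq1 k)
  have hpos := one_sub_npow_pos hq0 hq1 k
  rw [Real.norm_eq_abs, abs_div, abs_mul, abs_mul, abs_of_pos hpos,
    abs_of_nonneg (qpos hq0 _).le, abs_of_nonneg (by positivity : (0:ℝ) ≤ (k:ℝ) + 1),
    div_eq_mul_inv]
  calc ((k : ℝ) + 1) * |Real.log q| * q ^ (((k : ℝ) + 1) * y) * (1 - q ^ (k + 1))⁻¹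
      ≤ ((k : ℝ) + 1) * |Real.log q| * ((q ^ (x / 2)) ^ (k + 1)) * (1 - q)⁻¹ := by
        have hk : (0:ℝ) ≤ ((k : ℝ) + 1) * |Real.log q| := by positivity
        apply mul_le_mul
        · exact mul_le_mul_of_nonneg_left h1 hk
        · exact h2
        · positivity
        · positivity
    _ = ((k : ℝ) + 1) * (q ^ (x / 2)) ^ (k + 1) * (|Real.log q| / (1 - q)) := by
        rw [div_eq_mul_inv]; ring

lemma hasDerivAt_qDigamma (hq0 : 0 < q) (hq1 : q < 1) {x : ℝ} (hx : 0 < x) :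
    HasDerivAt (qDigamma q)
      ((Real.log q) ^ 2 * ∑' k : ℕ, ((k : ℝ) + 1) * q ^ (((k : ℝ) + 1) * x) / (1 - q ^ (k + 1)))
      x := by
  have h : qDigamma q = fun t =>
      -Real.log (1 - q) + Real.log q * ∑' k : ℕ, q ^ (((k : ℝ) + 1) * t) / (1 - q ^ (k + 1)) := by
    funext t; rfl
  rw [h]
  have hd := ((hasDerivAt_Dsum hq0 hq1 hx).const_mul (Real.log q)).const_add (-Real.log (1 - q))
  refine hd.congr_deriv ?_
  rw [← tsum_mul_left, ← tsum_mul_left]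
  congr 1; funext k; ring


lemma neg_log_le {y : ℝ} (h : 0 < 1 - y) : -Real.log (1 - y) ≤ y / (1 - y) := by
  have h1 : Real.log (1 - y)⁻¹ ≤ (1 - y)⁻¹ - 1 :=
    Real.log_le_sub_one_of_pos (by positivity)
  rw [Real.log_inv] at h1
  have h2 : (1 - y)⁻¹ - 1 = y / (1 - y) := by field_simp; ring
  linarith [h1, h2.le, h2.ge]

lemma neg_log_nonneg {y : ℝ} (h : 0 < 1 - y) (hy : 0 ≤ y) : 0 ≤ -Real.log (1 - y) := by
  have := Real.log_nonpos h.le (by linarith)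
  linarith

lemma rpow_nat_add (hq0 : 0 < q) (j : ℕ) (c : ℝ) : q ^ ((j : ℝ) + c) = q ^ j * q ^ c := by
  rw [Real.rpow_add hq0, Real.rpow_natCast]

lemma summable_neg_log (hq0 : 0 < q) (hq1 : q < 1) {c : ℝ} (hc : 0 < c) :
    Summable (fun j : ℕ => -Real.log (1 - q ^ ((j : ℝ) + c))) := by
  have hcpos : ∀ j : ℕ, (0:ℝ) < (j : ℝ) + c := fun j => by positivity
  have hylt : ∀ j : ℕ, q ^ ((j : ℝ) + c) ≤ q ^ c := fun j =>
    rpow_le_rpow_exp hq0 hq1 (le_add_of_nonneg_left (Nat.cast_nonneg j))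
  have h1 : ∀ j : ℕ, 0 < 1 - q ^ ((j : ℝ) + c) := fun j =>
    one_sub_qpow_pos hq0 hq1 (hcpos j)
  refine Summable.of_nonneg_of_le
    (f := fun j : ℕ => q ^ j * (q ^ c / (1 - q ^ c)))
    (fun j => neg_log_nonneg (h1 j) (qpos hq0 _).le)
    (fun j => ?_)
    ((summable_geometric_of_lt_one hq0.le hq1).mul_right _)
  calc -Real.log (1 - q ^ ((j : ℝ) + c))
      ≤ q ^ ((j : ℝ) + c) / (1 - q ^ ((j : ℝ) + c)) := neg_log_le (h1 j)
    _ ≤ q ^ ((j : ℝ) + c) / (1 - q ^ c) := by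
        apply div_le_div_of_nonneg_left (qpos hq0 _).le (one_sub_qpow_pos hq0 hq1 hc)
        exact sub_le_sub_left (hylt j) 1
    _ = q ^ j * (q ^ c / (1 - q ^ c)) := by rw [rpow_nat_add hq0]; ring

lemma summable_G (hq0 : 0 < q) (hq1 : q < 1) {t : ℝ} (ht : 0 < t) :
    Summable (fun j : ℕ => Real.log (1 - q ^ (j + 1)) - Real.log (1 - q ^ ((j : ℝ) + t))) := by
  have h1 : Summable (fun j : ℕ => -Real.log (1 - q ^ ((j : ℝ) + (1:ℝ)))) :=
    summable_neg_log hq0 hq1 one_pos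
  have h2 := (summable_neg_log hq0 hq1 ht).sub h1
  refine h2.congr fun j => ?_
  rw [npow_eq_rpow hq0]
  ring


lemma hasDerivAt_log_one_sub_qshift (hq0 : 0 < q) (hq1 : q < 1) (c : ℝ) {y : ℝ}
    (hy : 0 < c + y) :
    HasDerivAt (fun t => Real.log (1 - q ^ (c + t)))
      (-(q ^ (c + y) * Real.log q) / (1 - q ^ (c + y))) y := by
  have h1 : HasDerivAt (fun t => 1 - q ^ (c + t)) (-(q ^ (c + y) * Real.log q)) y :=
    (hasDerivAt_qshift hq0 c y).const_sub 1
  exact h1.log (one_sub_qpow_pos hq0 hq1 hy).ne'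

lemma hasDerivAt_G (hq0 : 0 < q) (hq1 : q < 1) {x : ℝ} (hx : 0 < x) :
    HasDerivAt
      (fun t => ∑' j : ℕ, (Real.log (1 - q ^ (j + 1)) - Real.log (1 - q ^ ((j : ℝ) + t))))
      (∑' j : ℕ, q ^ ((j : ℝ) + x) * Real.log q / (1 - q ^ ((j : ℝ) + x))) x := by
  have hx2 : (0:ℝ) < x / 2 := by linarith
  refine hasDerivAt_tsum_of_isPreconnected
    (u := fun j : ℕ => q ^ j * (q ^ (x / 2) * |Real.log q| / (1 - q ^ (x / 2))))
    (t := Set.Ioi (x / 2))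
    (g := fun j t => Real.log (1 - q ^ (j + 1)) - Real.log (1 - q ^ ((j : ℝ) + t)))
    (g' := fun j t => q ^ ((j : ℝ) + t) * Real.log q / (1 - q ^ ((j : ℝ) + t)))
    (((summable_geometric_of_lt_one hq0.le hq1).mul_right _))
    isOpen_Ioi isPreconnected_Ioi
    (fun j y hy => ?_) (fun j y hy => ?_)
    (mem_Ioi.2 (by linarith)) (summable_G hq0 hq1 hx) (mem_Ioi.2 (by linarith))
  · have hy0 : 0 < (j : ℝ) + y := by
      have h := mem_Ioi.1 hy
      have h2 := Nat.cast_nonneg (α := ℝ) j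
      linarith
    have := (hasDerivAt_log_one_sub_qshift hq0 hq1 (j : ℝ) hy0).const_sub
      (Real.log (1 - q ^ (j + 1)))
    convert this using 1
    ring
  · have hy2 : x / 2 ≤ y := (mem_Ioi.1 hy).le
    have hy0 : 0 < (j : ℝ) + y := by linarith [Nat.cast_nonneg (α := ℝ) j]
    have hb1 : q ^ ((j : ℝ) + y) ≤ q ^ j * q ^ (x / 2) := by
      rw [rpow_nat_add hq0]
      exact mul_le_mul_of_nonneg_left (rpow_le_rpow_exp hq0 hq1 hy2) (by positivity)
    have hb2 : q ^ ((j : ℝ) + y) ≤ q ^ (x / 2) :=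
      rpow_le_rpow_exp hq0 hq1 (by linarith [Nat.cast_nonneg (α := ℝ) j])
    have hpos1 : 0 < 1 - q ^ ((j : ℝ) + y) := one_sub_qpow_pos hq0 hq1 hy0
    have hpos2 : 0 < 1 - q ^ (x / 2) := one_sub_qpow_pos hq0 hq1 hx2
    rw [Real.norm_eq_abs, abs_div, abs_mul, abs_of_pos hpos1,
      abs_of_nonneg (qpos hq0 _).le]
    calc q ^ ((j : ℝ) + y) * |Real.log q| / (1 - q ^ ((j : ℝ) + y))
        ≤ q ^ ((j : ℝ) + y) * |Real.log q| / (1 - q ^ (x / 2)) := by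
          apply div_le_div_of_nonneg_left (by positivity) hpos2
          exact sub_le_sub_left hb2 1
      _ ≤ q ^ j * q ^ (x / 2) * |Real.log q| / (1 - q ^ (x / 2)) := by
          have h := mul_le_mul_of_nonneg_right hb1 (abs_nonneg (Real.log q))
          gcongr
      _ = q ^ j * (q ^ (x / 2) * |Real.log q| / (1 - q ^ (x / 2))) := by ring


lemma swap_sum (hq0 : 0 < q) (hq1 : q < 1) {x : ℝ} (hx : 0 < x) :
    ∑' j : ℕ, q ^ ((j : ℝ) + x) * Real.log q / (1 - q ^ ((j : ℝ) + x))
      = Real.log q * ∑' k : ℕ, q ^ (((k : ℝ) + 1) * x) / (1 - q ^ (k + 1)) := by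
  have hxj : ∀ j : ℕ, (0:ℝ) < (j : ℝ) + x := fun j => by
    have := Nat.cast_nonneg (α := ℝ) j; linarith
  set a : ℕ × ℕ → ℝ := fun p => (q ^ ((p.1 : ℝ) + x)) ^ (p.2 + 1) with ha
  -- row sums (over k)
  have hrow : ∀ j : ℕ, HasSum (fun k => a (j, k))
      (q ^ ((j : ℝ) + x) / (1 - q ^ ((j : ℝ) + x))) := fun j =>
    hasSum_geom1 (qpos hq0 _).le (qlt1 hq0 hq1 (hxj j))
  -- column entries rewritten
  have hcol_entry : ∀ j k : ℕ, a (j, k) = (q ^ (k + 1)) ^ j * q ^ (((k : ℝ) + 1) * x) := by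
    intro j k
    rw [ha]
    simp only
    rw [← Real.rpow_natCast (q ^ ((j : ℝ) + x)) (k + 1), ← Real.rpow_mul hq0.le,
      npow_eq_rpow hq0, ← Real.rpow_natCast (q ^ ((k : ℝ) + 1)) j, ← Real.rpow_mul hq0.le,
      ← Real.rpow_add hq0]
    congr 1
    push_cast
    ring
  have hcol : ∀ k : ℕ, HasSum (fun j => a (j, k))
      (q ^ (((k : ℝ) + 1) * x) / (1 - q ^ (k + 1))) := by
    intro k
    have hgeo : HasSum (fun j : ℕ => (q ^ (k + 1)) ^ j) (1 - q ^ (k + 1))⁻¹ := by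
      have h1 : q ^ (k + 1) < 1 := by
        have := one_sub_npow_pos hq0 hq1 k; linarith
      simpa [one_div] using hasSum_geometric_of_lt_one (by positivity) h1
    have h2 := hgeo.mul_right (q ^ (((k : ℝ) + 1) * x))
    have h3 : (fun j : ℕ => a (j, k))
        = fun j => (q ^ (k + 1)) ^ j * q ^ (((k : ℝ) + 1) * x) :=
      funext fun j => hcol_entry j k
    rw [h3]
    rw [div_eq_mul_inv, mul_comm (q ^ (((k : ℝ) + 1) * x))]
    exact h2
  -- summability of the double series
  have hnonneg : ∀ p : ℕ × ℕ, 0 ≤ a p := fun p => pow_nonneg (qpos hq0 _).le _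
  have hrowsum_summable : Summable
      (fun j : ℕ => q ^ ((j : ℝ) + x) / (1 - q ^ ((j : ℝ) + x))) := by
    refine Summable.of_nonneg_of_le
      (f := fun j : ℕ => q ^ j * (q ^ x / (1 - q ^ x)))
      (fun j => div_nonneg (qpos hq0 _).le (one_sub_qpow_pos hq0 hq1 (hxj j)).le)
      (fun j => ?_)
      ((summable_geometric_of_lt_one hq0.le hq1).mul_right _)
    have hb : q ^ ((j : ℝ) + x) ≤ q ^ x :=
      rpow_le_rpow_exp hq0 hq1 (le_add_of_nonneg_left (Nat.cast_nonneg j))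
    calc q ^ ((j : ℝ) + x) / (1 - q ^ ((j : ℝ) + x))
        ≤ q ^ ((j : ℝ) + x) / (1 - q ^ x) := by
          apply div_le_div_of_nonneg_left (qpos hq0 _).le (one_sub_qpow_pos hq0 hq1 hx)
          exact sub_le_sub_left hb 1
      _ = q ^ j * (q ^ x / (1 - q ^ x)) := by rw [rpow_nat_add hq0]; ring
  have hsum : Summable a := by
    rw [show a = fun p : ℕ × ℕ => a (p.1, p.2) by funext p; rfl]
    refine (summable_prod_of_nonneg (fun p => hnonneg p)).2 ⟨fun j => (hrow j).summable, ?_⟩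
    refine hrowsum_summable.congr fun j => ((hrow j).tsum_eq).symm
  -- swap
  have he : Summable (a ∘ (Equiv.prodComm ℕ ℕ)) := (Equiv.summable_iff _).2 hsum
  have h1 : ∑' p : ℕ × ℕ, a p = ∑' (j : ℕ) (k : ℕ), a (j, k) := Summable.tsum_prod hsum
  have h2 : ∑' p : ℕ × ℕ, (a ∘ (Equiv.prodComm ℕ ℕ)) p
      = ∑' (k : ℕ) (j : ℕ), a (j, k) := Summable.tsum_prod he
  have h3 : ∑' p : ℕ × ℕ, (a ∘ (Equiv.prodComm ℕ ℕ)) p = ∑' p : ℕ × ℕ, a p :=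
    (Equiv.prodComm ℕ ℕ).tsum_eq a
  have hswap : ∑' (j : ℕ), ∑' (k : ℕ), a (j, k) = ∑' (k : ℕ), ∑' (j : ℕ), a (j, k) := by
    rw [← h1, ← h3, h2]
  calc ∑' j : ℕ, q ^ ((j : ℝ) + x) * Real.log q / (1 - q ^ ((j : ℝ) + x))
      = Real.log q * ∑' j : ℕ, q ^ ((j : ℝ) + x) / (1 - q ^ ((j : ℝ) + x)) := by
        rw [← tsum_mul_left]; congr 1; funext j; ring
    _ = Real.log q * ∑' (j : ℕ), ∑' (k : ℕ), a (j, k) := by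
        congr 1; exact tsum_congr fun j => ((hrow j).tsum_eq).symm
    _ = Real.log q * ∑' (k : ℕ), ∑' (j : ℕ), a (j, k) := by rw [hswap]
    _ = Real.log q * ∑' k : ℕ, q ^ (((k : ℝ) + 1) * x) / (1 - q ^ (k + 1)) := by
        congr 1; exact tsum_congr fun k => (hcol k).tsum_eq


lemma qGamma_eq_exp (hq0 : 0 < q) (hq1 : q < 1) {t : ℝ} (ht : 0 < t) :
    qGamma q t = (1 - q) ^ (1 - t) *
      Real.exp (∑' j : ℕ,
        (Real.log (1 - q ^ (j + 1)) - Real.log (1 - q ^ ((j : ℝ) + t)))) := by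
  have htj : ∀ j : ℕ, (0:ℝ) < (j : ℝ) + t := fun j => by
    have := Nat.cast_nonneg (α := ℝ) j; linarith
  set f : ℕ → Unit → ℝ := fun n _ => (1 - q ^ (n + 1)) / (1 - q ^ ((n : ℝ) + t)) with hf
  have hpos : ∀ (x : Unit) (n : ℕ), 0 < f n x := fun x n =>
    div_pos (one_sub_npow_pos hq0 hq1 n) (one_sub_qpow_pos hq0 hq1 (htj n))
  have hlog : ∀ n : ℕ, Real.log (f n ())
      = Real.log (1 - q ^ (n + 1)) - Real.log (1 - q ^ ((n : ℝ) + t)) := fun n =>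
    Real.log_div (one_sub_npow_pos hq0 hq1 n).ne' (one_sub_qpow_pos hq0 hq1 (htj n)).ne'
  have hsum : ∀ x : Unit, Summable fun n => Real.log (f n x) := fun x =>
    (summable_G hq0 hq1 ht).congr fun n => (hlog n).symm
  have h : Real.exp (∑' n, Real.log (f n ())) = ∏' n, f n () :=
    Real.rexp_tsum_eq_tprod (fun n => hpos () n) (hsum ())
  unfold qGamma
  congr 1
  rw [← h]
  congr 1
  exact tsum_congr hlog

lemma qGamma_pos (hq0 : 0 < q) (hq1 : q < 1) {t : ℝ} (ht : 0 < t) : 0 < qGamma q t := by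
  rw [qGamma_eq_exp hq0 hq1 ht]
  have h1 : (0:ℝ) < 1 - q := sub_pos.2 hq1
  positivity

lemma log_qGamma (hq0 : 0 < q) (hq1 : q < 1) {t : ℝ} (ht : 0 < t) :
    Real.log (qGamma q t) = (1 - t) * Real.log (1 - q)
      + ∑' j : ℕ, (Real.log (1 - q ^ (j + 1)) - Real.log (1 - q ^ ((j : ℝ) + t))) := by
  have h1 : (0:ℝ) < 1 - q := sub_pos.2 hq1
  rw [qGamma_eq_exp hq0 hq1 ht,
    Real.log_mul (Real.rpow_pos_of_pos h1 _).ne' (Real.exp_pos _).ne',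
    Real.log_rpow h1, Real.log_exp]

lemma hasDerivAt_log_qGamma (hq0 : 0 < q) (hq1 : q < 1) {x : ℝ} (hx : 0 < x) :
    HasDerivAt (fun t => Real.log (qGamma q t)) (qDigamma q x) x := by
  have hG := hasDerivAt_G hq0 hq1 hx
  have haff : HasDerivAt (fun t : ℝ => (1 - t) * Real.log (1 - q)) (-Real.log (1 - q)) x := by
    simpa using ((hasDerivAt_id x).const_sub 1).mul_const (Real.log (1 - q))
  have hsum := haff.add hG
  have heq : (fun t => Real.log (qGamma q t)) =ᶠ[nhds x]
      (fun t => (1 - t) * Real.log (1 - q)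
        + ∑' j : ℕ, (Real.log (1 - q ^ (j + 1)) - Real.log (1 - q ^ ((j : ℝ) + t)))) :=
    Filter.eventuallyEq_of_mem (Ioi_mem_nhds hx) (fun t ht' => log_qGamma hq0 hq1 ht')
  refine HasDerivAt.congr_of_eventuallyEq ?_ heq
  have hval : -Real.log (1 - q)
      + ∑' j : ℕ, q ^ ((j : ℝ) + x) * Real.log q / (1 - q ^ ((j : ℝ) + x))
      = qDigamma q x := by
    rw [swap_sum hq0 hq1 hx]; rfl
  rw [← hval]
  exact hsum


lemma continuousOn_dilog_integrand :
    ContinuousOn (fun s : ℝ => Real.log (1 - s) / s) (Set.Ioo (0:ℝ) 1) := by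
  intro s hs
  obtain ⟨h0, h1⟩ := hs
  apply ContinuousAt.continuousWithinAt
  exact ((Real.continuousAt_log (by linarith : 1 - s ≠ 0)).comp
    ((continuous_const.sub continuous_id).continuousAt)).div continuousAt_id h0.ne'

lemma intervalIntegrable_dilog {z : ℝ} (h0 : 0 < z) (h1 : z < 1) :
    IntervalIntegrable (fun s : ℝ => Real.log (1 - s) / s) MeasureTheory.volume 0 z := by
  rw [intervalIntegrable_iff, Set.uIoc_of_le h0.le]
  have hmeas : Measurable (fun s : ℝ => Real.log (1 - s) / s) :=
    (Real.measurable_log.comp (measurable_const.sub measurable_id)).div measurable_id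
  refine MeasureTheory.Integrable.mono'
    (g := fun _ => (1 - z)⁻¹)
    (MeasureTheory.integrableOn_const measure_Ioc_lt_top.ne)
    hmeas.aestronglyMeasurable ?_
  refine (MeasureTheory.ae_restrict_mem measurableSet_Ioc).mono fun s hs => ?_
  obtain ⟨hs0, hs1⟩ := hs
  have hz1 : 0 < 1 - z := by linarith
  have hs2 : 0 < 1 - s := by linarith
  rw [Real.norm_eq_abs, abs_div, abs_of_pos hs0]
  have hlog : |Real.log (1 - s)| ≤ s / (1 - s) := by
    rw [abs_of_nonpos (Real.log_nonpos hs2.le (by linarith))]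
    exact neg_log_le hs2
  calc |Real.log (1 - s)| / s ≤ (s / (1 - s)) / s := (div_le_div_iff_of_pos_right hs0).2 hlog
    _ = (1 - s)⁻¹ := by
        field_simp
    _ ≤ (1 - z)⁻¹ := by
        apply inv_anti₀ hz1
        linarith

lemma hasDerivAt_dilog {z : ℝ} (h0 : 0 < z) (h1 : z < 1) :
    HasDerivAt dilog (-Real.log (1 - z) / z) z := by
  have hint := intervalIntegrable_dilog h0 h1
  have hopen : IsOpen (Set.Ioo (0:ℝ) 1) := isOpen_Ioo
  have hz : z ∈ Set.Ioo (0:ℝ) 1 := ⟨h0, h1⟩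
  have hmeas : StronglyMeasurableAtFilter (fun s : ℝ => Real.log (1 - s) / s)
      (nhds z) MeasureTheory.volume :=
    ContinuousOn.stronglyMeasurableAtFilter hopen continuousOn_dilog_integrand z hz
  have hcont : ContinuousAt (fun s : ℝ => Real.log (1 - s) / s) z :=
    (continuousOn_dilog_integrand.continuousAt (hopen.mem_nhds hz))
  have h := intervalIntegral.integral_hasDerivAt_right hint hmeas hcont
  have h2 := h.neg
  have : dilog = fun u => -∫ t in (0:ℝ)..u, Real.log (1 - t) / t := rfl
  rw [this]
  refine h2.congr_deriv ?_
  rw [neg_div]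

lemma hasDerivAt_dilog_comp (hq0 : 0 < q) (hq1 : q < 1) {x : ℝ} (hx : 0 < x) :
    HasDerivAt (fun u => -dilog (1 - q ^ u) / Real.log q)
      (-(x * Real.log q * q ^ x / (1 - q ^ x))) x := by
  have hqx0 : 0 < q ^ x := qpos hq0 x
  have hqx1 : q ^ x < 1 := qlt1 hq0 hq1 hx
  have hL : Real.log q ≠ 0 := (Real.log_neg hq0 hq1).ne
  have hinner : HasDerivAt (fun u : ℝ => 1 - q ^ u) (-(q ^ x * Real.log q)) x := by
    have h5 := hasDerivAt_qexp hq0 1 x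
    simp only [one_mul] at h5
    have h6 := h5.const_sub 1
    refine h6.congr_deriv ?_
    ring
  have hd := hasDerivAt_dilog (z := 1 - q ^ x) (by linarith) (by linarith)
  have hcomp := hd.comp x hinner
  have h3 := (hcomp.neg).div_const (Real.log q)
  refine h3.congr_deriv ?_
  have h4 : (1 : ℝ) - (1 - q ^ x) = q ^ x := by ring
  rw [h4, Real.log_rpow hq0]
  have hne : (1:ℝ) - q ^ x ≠ 0 := (one_sub_qpow_pos hq0 hq1 hx).ne'
  field_simp [hL, hne]


lemma log_qf_eq (hq0 : 0 < q) (hq1 : q < 1) (α β : ℝ) (hβ : 1 ≤ β) {u : ℝ} (hu : 0 < u) :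
    Real.log (qf α β q u) = Real.log (qGamma q (u + β)) + (-dilog (1 - q ^ u) / Real.log q)
      - (u + β - α) * Real.log ((1 - q ^ u) / (1 - q)) := by
  unfold qf
  have hub : 0 < u + β := by linarith
  have hΓ := qGamma_pos hq0 hq1 hub
  have hbase : 0 < (1 - q ^ u) / (1 - q) :=
    div_pos (one_sub_qpow_pos hq0 hq1 hu) (sub_pos.2 hq1)
  rw [Real.log_div (mul_pos hΓ (Real.exp_pos _)).ne' (Real.rpow_pos_of_pos hbase _).ne',
    Real.log_mul hΓ.ne' (Real.exp_pos _).ne', Real.log_exp, Real.log_rpow hbase]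

lemma hasDerivAt_log_ratio (hq0 : 0 < q) (hq1 : q < 1) {t : ℝ} (ht : 0 < t) :
    HasDerivAt (fun u => Real.log ((1 - q ^ u) / (1 - q)))
      (-(q ^ t * Real.log q) / (1 - q ^ t)) t := by
  have hne : (1:ℝ) - q ^ t ≠ 0 := (one_sub_qpow_pos hq0 hq1 ht).ne'
  have h1q : (0:ℝ) < 1 - q := sub_pos.2 hq1
  have hg : HasDerivAt (fun u : ℝ => (1 - q ^ u) / (1 - q))
      (-(q ^ t * Real.log q) / (1 - q)) t := by
    have h5 := hasDerivAt_qexp hq0 1 t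
    simp only [one_mul] at h5
    have h6 := (h5.const_sub 1).div_const (1 - q)
    refine h6.congr_deriv ?_
    ring
  have h := hg.log (by
    have := div_pos (one_sub_qpow_pos hq0 hq1 ht) h1q
    exact this.ne')
  convert h using 1
  field_simp

lemma hasDerivAt_log_qf (hq0 : 0 < q) (hq1 : q < 1) (α β : ℝ) (hβ : 1 ≤ β) {t : ℝ}
    (ht : 0 < t) :
    HasDerivAt (fun u => Real.log (qf α β q u))
      (qDigamma q (t + β) - Real.log ((1 - q ^ t) / (1 - q))
        + (β - α) * Real.log q * q ^ t / (1 - q ^ t)) t := by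
  have htβ : 0 < t + β := by linarith
  have hne : (1:ℝ) - q ^ t ≠ 0 := (one_sub_qpow_pos hq0 hq1 ht).ne'
  -- P1
  have hP1 : HasDerivAt (fun u => Real.log (qGamma q (u + β))) (qDigamma q (t + β)) t := by
    have h := (hasDerivAt_log_qGamma hq0 hq1 htβ).comp t ((hasDerivAt_id t).add_const β)
    exact h.congr_deriv (mul_one _)
  -- P2
  have hP2 := hasDerivAt_dilog_comp hq0 hq1 ht
  -- P3
  have hP3 : HasDerivAt (fun u => (u + β - α) * Real.log ((1 - q ^ u) / (1 - q)))
      (Real.log ((1 - q ^ t) / (1 - q))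
        + (t + β - α) * (-(q ^ t * Real.log q) / (1 - q ^ t))) t := by
    have h1 : HasDerivAt (fun u : ℝ => u + β - α) 1 t := by
      simpa using ((hasDerivAt_id t).add_const β).sub_const α
    have h := h1.mul (hasDerivAt_log_ratio hq0 hq1 ht)
    refine h.congr_deriv ?_
    ring
  have htot := (hP1.add hP2).sub hP3
  have heq : (fun u => Real.log (qf α β q u)) =ᶠ[nhds t]
      (fun u => Real.log (qGamma q (u + β)) + (-dilog (1 - q ^ u) / Real.log q)
        - (u + β - α) * Real.log ((1 - q ^ u) / (1 - q))) :=
    Filter.eventuallyEq_of_mem (Ioi_mem_nhds ht) (fun u hu => log_qf_eq hq0 hq1 α β hβ hu)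
  refine HasDerivAt.congr_of_eventuallyEq ?_ heq
  refine htot.congr_deriv ?_
  field_simp
  ring


lemma hasDerivAt_g1 (hq0 : 0 < q) (hq1 : q < 1) (α β : ℝ) (hβ : 1 ≤ β) {x : ℝ}
    (hx : 0 < x) :
    HasDerivAt
      (fun t => qDigamma q (t + β) - Real.log ((1 - q ^ t) / (1 - q))
        + (β - α) * Real.log q * q ^ t / (1 - q ^ t))
      (deriv (qDigamma q) (x + β)
        + (β - α) * (Real.log q) ^ 2 * q ^ x / (1 - q ^ x) ^ 2
        + Real.log q * q ^ x / (1 - q ^ x)) x := by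
  have hxβ : 0 < x + β := by linarith
  have hne : (1:ℝ) - q ^ x ≠ 0 := (one_sub_qpow_pos hq0 hq1 hx).ne'
  have hD := hasDerivAt_qDigamma hq0 hq1 hxβ
  have hDval : deriv (qDigamma q) (x + β)
      = (Real.log q) ^ 2 * ∑' k : ℕ, ((k : ℝ) + 1) * q ^ (((k : ℝ) + 1) * (x + β))
        / (1 - q ^ (k + 1)) := hD.deriv
  have hA : HasDerivAt (fun t => qDigamma q (t + β)) (deriv (qDigamma q) (x + β)) x := by
    have h := hD.comp x ((hasDerivAt_id x).add_const β)
    rw [hDval]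
    exact h.congr_deriv (mul_one _)
  have hB := hasDerivAt_log_ratio hq0 hq1 hx
  have hq' : HasDerivAt (fun u : ℝ => q ^ u) (q ^ x * Real.log q) x := by
    have h5 := hasDerivAt_qexp hq0 1 x
    simp only [one_mul] at h5
    convert h5 using 1
    ring
  have hC0 : HasDerivAt (fun u : ℝ => q ^ u / (1 - q ^ u))
      ((q ^ x * Real.log q * (1 - q ^ x) - q ^ x * (-(q ^ x * Real.log q)))
        / (1 - q ^ x) ^ 2) x := by
    have hden : HasDerivAt (fun u : ℝ => 1 - q ^ u) (-(q ^ x * Real.log q)) x :=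
      hq'.const_sub 1
    exact hq'.div hden hne
  have hC := hC0.const_mul ((β - α) * Real.log q)
  have htot := (hA.sub hB).add hC
  refine (htot.congr_of_eventuallyEq (Filter.Eventually.of_forall fun t => ?_)).congr_deriv ?_
  · simp only [Pi.add_apply, Pi.sub_apply]; ring
  field_simp
  ring


lemma phi_val (hq0 : 0 < q) (α β : ℝ) (k : ℕ) :
    Phi α β (q ^ (k + 1))
      = q ^ (((k : ℝ) + 1) * β) * (((k : ℝ) + 1) * Real.log q)
        + (β - α) * (1 - q ^ (k + 1)) * (((k : ℝ) + 1) * Real.log q)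
        + (1 - q ^ (k + 1)) := by
  unfold Phi
  have h1 : ((q : ℝ) ^ (k + 1)) ^ (β : ℝ) = q ^ (((k : ℝ) + 1) * β) := by
    rw [npow_eq_rpow hq0, ← Real.rpow_mul hq0.le]
  rw [h1, Real.log_pow]
  push_cast
  ring

lemma term_eq (hq0 : 0 < q) (hq1 : q < 1) (α β x : ℝ) (k : ℕ) :
    Real.log q * q ^ (((k : ℝ) + 1) * x) / (1 - q ^ (k + 1)) * Phi α β (q ^ (k + 1))
      = (Real.log q) ^ 2 * (((k : ℝ) + 1) * q ^ (((k : ℝ) + 1) * (x + β)) / (1 - q ^ (k + 1)))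
        + ((β - α) * (Real.log q) ^ 2) * (((k : ℝ) + 1) * q ^ (((k : ℝ) + 1) * x))
        + Real.log q * q ^ (((k : ℝ) + 1) * x) := by
  have hne : (1:ℝ) - q ^ (k + 1) ≠ 0 := (one_sub_npow_pos hq0 hq1 k).ne'
  have hsplit : q ^ (((k : ℝ) + 1) * (x + β))
      = q ^ (((k : ℝ) + 1) * x) * q ^ (((k : ℝ) + 1) * β) := by
    rw [← Real.rpow_add hq0]
    ring_nf
  rw [phi_val hq0 α β k, hsplit]
  field_simp

end QFA

end

open Real Filter Set in
/-- For `0 < q < 1` and `2α ≤ 1 ≤ β`, the second derivative of `log f_{α,β}(·;q)` at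
any `x > 0` equals `ψ_q'(x+β) + (β−α)(log q)² q^x/(1−q^x)² + (log q) q^x/(1−q^x)`,
which in turn equals `Σ_{k=1}^∞ (log q)·q^{kx}/(1−q^k) · Φ_{α,β}(q^k)`, the series
being convergent. -/


theorem iteratedDeriv_two_log_qf (q α β : ℝ) (hq0 : 0 < q) (hq1 : q < 1)
    (hα : 2 * α ≤ 1) (hβ : 1 ≤ β) (x : ℝ) (hx : 0 < x) :
    iteratedDeriv 2 (fun t => Real.log (qf α β q t)) x
        = deriv (qDigamma q) (x + β)
          + (β - α) * (Real.log q) ^ 2 * q ^ x / (1 - q ^ x) ^ 2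
          + Real.log q * q ^ x / (1 - q ^ x) ∧
      Summable (fun k : ℕ =>
        Real.log q * q ^ (((k : ℝ) + 1) * x) / (1 - q ^ (k + 1)) * Phi α β (q ^ (k + 1))) ∧
      iteratedDeriv 2 (fun t => Real.log (qf α β q t)) x
        = ∑' k : ℕ,
            Real.log q * q ^ (((k : ℝ) + 1) * x) / (1 - q ^ (k + 1)) * Phi α β (q ^ (k + 1)) := by
  have hxβ : 0 < x + β := by linarith
  -- second derivative computation
  have hderiv_eq : (deriv fun t => Real.log (qf α β q t)) =ᶠ[nhds x]
      (fun t => qDigamma q (t + β) - Real.log ((1 - q ^ t) / (1 - q))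
        + (β - α) * Real.log q * q ^ t / (1 - q ^ t)) :=
    Filter.eventuallyEq_of_mem (Ioi_mem_nhds hx)
      (fun t ht => (QFA.hasDerivAt_log_qf hq0 hq1 α β hβ ht).deriv)
  have h2 := QFA.hasDerivAt_g1 hq0 hq1 α β hβ hx
  have hmain : iteratedDeriv 2 (fun t => Real.log (qf α β q t)) x
      = deriv (qDigamma q) (x + β)
        + (β - α) * (Real.log q) ^ 2 * q ^ x / (1 - q ^ x) ^ 2
        + Real.log q * q ^ x / (1 - q ^ x) := by
    rw [iteratedDeriv_succ, iteratedDeriv_one, hderiv_eq.deriv_eq, h2.deriv]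
  -- the three component series
  have hqx0 : (0:ℝ) ≤ q ^ x := (QFA.qpos hq0 x).le
  have hqx1 : q ^ x < 1 := QFA.qlt1 hq0 hq1 hx
  have hsA : Summable (fun k : ℕ => (Real.log q) ^ 2
      * (((k : ℝ) + 1) * q ^ (((k : ℝ) + 1) * (x + β)) / (1 - q ^ (k + 1)))) := by
    have h := (QFA.summable_D2 hq0 hq1 hxβ).mul_left ((Real.log q) ^ 2)
    exact h.congr fun k => by ring
  have hgeo2 : HasSum (fun k : ℕ => ((k : ℝ) + 1) * q ^ (((k : ℝ) + 1) * x))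
      (q ^ x / (1 - q ^ x) ^ 2) := by
    have h := QFA.hasSum_geom2 hqx0 hqx1
    exact h.congr_fun fun k => by rw [QFA.qpow_mul hq0 x k]
  have hgeo1 : HasSum (fun k : ℕ => q ^ (((k : ℝ) + 1) * x)) (q ^ x / (1 - q ^ x)) := by
    have h := QFA.hasSum_geom1 hqx0 hqx1
    exact h.congr_fun fun k => by rw [QFA.qpow_mul hq0 x k]
  have hsB := (hgeo2.mul_left ((β - α) * (Real.log q) ^ 2))
  have hsC := (hgeo1.mul_left (Real.log q))
  -- summability of the full series
  have hterm : ∀ k : ℕ,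
      Real.log q * q ^ (((k : ℝ) + 1) * x) / (1 - q ^ (k + 1)) * Phi α β (q ^ (k + 1))
        = (Real.log q) ^ 2 * (((k : ℝ) + 1) * q ^ (((k : ℝ) + 1) * (x + β)) / (1 - q ^ (k + 1)))
          + ((β - α) * (Real.log q) ^ 2) * (((k : ℝ) + 1) * q ^ (((k : ℝ) + 1) * x))
          + Real.log q * q ^ (((k : ℝ) + 1) * x) :=
    fun k => QFA.term_eq hq0 hq1 α β x k
  have hsum : Summable (fun k : ℕ =>
      Real.log q * q ^ (((k : ℝ) + 1) * x) / (1 - q ^ (k + 1)) * Phi α β (q ^ (k + 1))) := by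
    have h := (hsA.add hsB.summable).add hsC.summable
    exact h.congr fun k => (hterm k).symm
  refine ⟨hmain, hsum, ?_⟩
  rw [hmain]
  -- evaluate the tsum
  have htsum : ∑' k : ℕ,
      Real.log q * q ^ (((k : ℝ) + 1) * x) / (1 - q ^ (k + 1)) * Phi α β (q ^ (k + 1))
      = (∑' k : ℕ, (Real.log q) ^ 2
          * (((k : ℝ) + 1) * q ^ (((k : ℝ) + 1) * (x + β)) / (1 - q ^ (k + 1))))
        + (((β - α) * (Real.log q) ^ 2) * (q ^ x / (1 - q ^ x) ^ 2))
        + (Real.log q * (q ^ x / (1 - q ^ x))) := by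
    rw [tsum_congr hterm]
    rw [Summable.tsum_add (hsA.add hsB.summable) hsC.summable, Summable.tsum_add hsA hsB.summable,
      hsB.tsum_eq, hsC.tsum_eq]
  rw [htsum]
  have hDval : deriv (qDigamma q) (x + β)
      = (Real.log q) ^ 2 * ∑' k : ℕ, ((k : ℝ) + 1) * q ^ (((k : ℝ) + 1) * (x + β))
        / (1 - q ^ (k + 1)) := (QFA.hasDerivAt_qDigamma hq0 hq1 hxβ).deriv
  rw [hDval, tsum_mul_left]
  ring
end

section
/- Let α be a real number and let y∈(0,1). Then y log y + (1−α)(1−y) log y + (1−y) = y · Σ_{k=2}^{∞} (log(1/y))^k/(k−1)! · (α − 1 + 1/k), where the series on the right converges. -/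
/-- For `y ∈ (0,1)` and real `α`, the identity
`y log y + (1−α)(1−y) log y + (1−y) = y · Σ_{k=2}^∞ (log(1/y))^k/(k−1)! · (α−1+1/k)`
holds, the series being convergent (the sum below is indexed so that `k+2` ranges
over `2, 3, …`). -/
theorem phi_eq_series (α y : ℝ) (hy0 : 0 < y) (hy1 : y < 1) :
    ∃ S : ℝ,
      HasSum (fun k : ℕ =>
        (Real.log (1 / y)) ^ (k + 2) / (Nat.factorial (k + 1)) * (α - 1 + 1 / ((k : ℝ) + 2))) S ∧
      y * Real.log y + (1 - α) * (1 - y) * Real.log y + (1 - y) = y * S := by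
  set t := Real.log (1 / y) with ht
  have hty : Real.log y = -t := by rw [ht, one_div, Real.log_inv]; ring
  have hexp : Real.exp t = 1 / y := by rw [ht, Real.exp_log (by positivity)]
  have h1 : HasSum (fun n : ℕ => t ^ n / n.factorial) (Real.exp t) := by
    rw [Real.exp_eq_exp_ℝ]
    exact NormedSpace.expSeries_div_hasSum_exp t
  have h2 : HasSum (fun k : ℕ => t ^ (k + 2) / (k + 2).factorial)
      (Real.exp t - (1 + t)) := by
    have := (hasSum_nat_add_iff' (f := fun n : ℕ => t ^ n / n.factorial) 2).mpr h1
    simpa [Finset.sum_range_succ, Nat.factorial] using this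
  have h3 : HasSum (fun k : ℕ => t ^ (k + 1) / (k + 1).factorial)
      (Real.exp t - 1) := by
    have := (hasSum_nat_add_iff' (f := fun n : ℕ => t ^ n / n.factorial) 1).mpr h1
    simpa [Finset.sum_range_succ] using this
  have h4 := (h3.mul_left ((α - 1) * t)).add h2
  have hfun : (fun k : ℕ =>
      (α - 1) * t * (t ^ (k + 1) / (k + 1).factorial) + t ^ (k + 2) / (k + 2).factorial)
      = fun k : ℕ => t ^ (k + 2) / (Nat.factorial (k + 1)) * (α - 1 + 1 / ((k : ℝ) + 2)) := by
    funext k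
    have hf1 : ((k + 1).factorial : ℝ) ≠ 0 := by positivity
    have hf2 : ((k + 2).factorial : ℝ) = ((k : ℝ) + 2) * (k + 1).factorial := by
      rw [show k + 2 = (k + 1) + 1 from rfl, Nat.factorial_succ]
      push_cast; ring
    have hk2 : ((k : ℝ) + 2) ≠ 0 := by positivity
    rw [hf2]
    field_simp
    ring
  rw [hfun] at h4
  refine ⟨_, h4, ?_⟩
  rw [hty, hexp]
  field_simp
  ring
end

section
/- Let α be a real number with 2α≤1. Then for every y∈(0,1), y log y + (1−α)(1−y) log y + (1−y) ≤ 0. -/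
lemma log_le_pade (y : ℝ) (hy0 : 0 < y) (hy1 : y ≤ 1) :
    Real.log y ≤ 2 * (y - 1) / (y + 1) := by
  set f : ℝ → ℝ := fun x => Real.log x - 2 * (x - 1) / (x + 1) with hf
  have key : ∀ x ∈ Set.Icc y 1, HasDerivAt f ((x - 1)^2 / (x * (x + 1)^2)) x := by
    intro x hx
    have hx0 : 0 < x := lt_of_lt_of_le hy0 hx.1
    have hx1 : x + 1 ≠ 0 := by positivity
    have h1 : HasDerivAt Real.log (1 / x) x := by
      simpa using Real.hasDerivAt_log (ne_of_gt hx0)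
    have h2 : HasDerivAt (fun x : ℝ => 2 * (x - 1) / (x + 1))
        ((2 * (x + 1) - 2 * (x - 1) * 1) / (x + 1)^2) x := by
      exact HasDerivAt.div (by simpa using ((hasDerivAt_id x).sub_const 1).const_mul 2)
        ((hasDerivAt_id x).add_const 1) hx1
    have := h1.sub h2
    refine this.congr_deriv ?_
    field_simp
    ring
  have hmono : MonotoneOn f (Set.Icc y 1) := by
    apply monotoneOn_of_deriv_nonneg (convex_Icc y 1)
    · exact continuousOn_of_forall_continuousAt fun x hx => ((key x hx).continuousAt)
    · intro x hx
      have hx' : x ∈ Set.Icc y 1 := Set.mem_Icc_of_Ioo (by rwa [interior_Icc] at hx)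
      exact (key x hx').differentiableAt.differentiableWithinAt
    · intro x hx
      have hx' : x ∈ Set.Icc y 1 := Set.mem_Icc_of_Ioo (by rwa [interior_Icc] at hx)
      have hx0 : 0 < x := lt_of_lt_of_le hy0 hx'.1
      rw [(key x hx').deriv]
      positivity
  have h := hmono (Set.mem_Icc.mpr ⟨le_refl y, hy1⟩) (Set.mem_Icc.mpr ⟨hy1, le_refl 1⟩) hy1
  simp only [hf, Real.log_one] at h
  linarith [h]

/-- If `2α ≤ 1`, then `Φ_{α,1}(y) = y log y + (1−α)(1−y) log y + (1−y) ≤ 0` for all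
`y ∈ (0,1)`. -/
theorem phi_nonpos_of_two_alpha_le_one (α : ℝ) (hα : 2 * α ≤ 1)
    (y : ℝ) (hy0 : 0 < y) (hy1 : y < 1) :
    y * Real.log y + (1 - α) * (1 - y) * Real.log y + (1 - y) ≤ 0 := by
  have hlog : Real.log y < 0 := Real.log_neg hy0 hy1
  have hpade := log_le_pade y hy0 hy1.le
  have hy1' : (0:ℝ) < y + 1 := by linarith
  have hmul : (y + 1) / 2 * Real.log y ≤ (y + 1) / 2 * (2 * (y - 1) / (y + 1)) := by
    apply mul_le_mul_of_nonneg_left hpade (by positivity)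
  have heq : (y + 1) / 2 * (2 * (y - 1) / (y + 1)) = y - 1 := by
    field_simp
  have hstep : (1 - α) * (1 - y) * Real.log y ≤ (1/2) * (1 - y) * Real.log y := by
    have : (1 - y) * Real.log y ≤ 0 := mul_nonpos_of_nonneg_of_nonpos (by linarith) hlog.le
    nlinarith
  nlinarith [hmul, heq, hstep]
end

section
/- Let α, β be real numbers with 2α≤1≤β. Then for every y∈(0,1), y^β log y + (β−α)(1−y) log y + (1−y) ≤ 0. -/
/-- `log x ≥ 1 - 1/x` for `x > 0`. -/
lemma aux_log_ge (x : ℝ) (hx : 0 < x) : 1 - 1/x ≤ Real.log x := by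
  have h := Real.log_le_sub_one_of_pos (show (0:ℝ) < 1/x by positivity)
  rw [one_div, Real.log_inv] at h
  rw [one_div]
  linarith

/-- Key: `(1+y) log y ≤ 2 (y-1)` for `0 < y ≤ 1`. -/
lemma aux_key (y : ℝ) (hy0 : 0 < y) (hy1 : y ≤ 1) :
    (1 + y) * Real.log y ≤ 2 * (y - 1) := by
  set f : ℝ → ℝ := fun x => 2 * (x - 1) - (1 + x) * Real.log x with hf
  have hderiv : ∀ x ∈ Set.Ioo y 1, HasDerivAt f (2 - (Real.log x + (1 + x) / x)) x := by
    intro x hx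
    have hx0 : 0 < x := lt_of_lt_of_le hy0 hx.1.le
    have h1 : HasDerivAt (fun x : ℝ => 2 * (x - 1)) 2 x := by
      simpa using ((hasDerivAt_id x).sub_const 1).const_mul 2
    have h2 : HasDerivAt (fun x : ℝ => (1 + x) * Real.log x)
        (1 * Real.log x + (1 + x) * x⁻¹) x :=
      ((hasDerivAt_id x).const_add 1).mul (Real.hasDerivAt_log hx0.ne')
    have := h1.sub h2
    exact this.congr_deriv (by rw [one_mul, div_eq_mul_inv])
  have hanti : AntitoneOn f (Set.Icc y 1) := by
    apply antitoneOn_of_deriv_nonpos (convex_Icc y 1)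
    · apply ContinuousOn.sub (by fun_prop)
      apply ContinuousOn.mul (by fun_prop)
      exact Real.continuousOn_log.mono (fun x hx => by
        simp only [Set.mem_compl_iff, Set.mem_singleton_iff]
        exact (lt_of_lt_of_le hy0 hx.1).ne')
    · intro x hx
      rw [interior_Icc] at hx
      exact ((hderiv x hx).differentiableAt).differentiableWithinAt
    · intro x hx
      rw [interior_Icc] at hx
      have hx0 : 0 < x := lt_of_lt_of_le hy0 hx.1.le
      rw [(hderiv x hx).deriv]
      have hlog := aux_log_ge x hx0
      have : (1 + x) / x = 1 + 1/x := by field_simp; ring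
      rw [this]
      linarith
  have h := hanti (Set.left_mem_Icc.mpr hy1) (Set.right_mem_Icc.mpr hy1) hy1
  simp only [hf, Real.log_one] at h
  linarith

/-- If `2α ≤ 1 ≤ β`, then `Φ_{α,β}(y) = y^β log y + (β−α)(1−y) log y + (1−y) ≤ 0`
for all `y ∈ (0,1)`. -/
theorem phi_general_nonpos (α β : ℝ) (hα : 2 * α ≤ 1) (hβ : 1 ≤ β)
    (y : ℝ) (hy0 : 0 < y) (hy1 : y < 1) :
    y ^ β * Real.log y + (β - α) * (1 - y) * Real.log y + (1 - y) ≤ 0 := by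
  set l := Real.log y with hl
  have hlneg : l < 0 := Real.log_neg hy0 hy1
  -- A: tangent bound y^β ≥ y (1 + (β-1) l)
  have hA : y * (1 + (β - 1) * l) ≤ y ^ β := by
    have h1 : y ^ β = Real.exp (β * l) := by
      rw [hl, Real.rpow_def_of_pos hy0, mul_comm]
    have h2 : Real.exp (β * l) = Real.exp l * Real.exp ((β - 1) * l) := by
      rw [← Real.exp_add]; ring_nf
    have h3 : 1 + (β - 1) * l ≤ Real.exp ((β - 1) * l) := by
      have := Real.add_one_le_exp ((β - 1) * l)
      linarith
    have h4 : Real.exp l = y := Real.exp_log hy0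
    rw [h1, h2, h4]
    exact mul_le_mul_of_nonneg_left h3 hy0.le
  -- B: y l ≥ y - 1
  have hB : y - 1 ≤ y * l := by
    have h := aux_log_ge y hy0
    have := mul_le_mul_of_nonneg_left h hy0.le
    rw [mul_sub] at this
    have hy' : y * (1/y) = 1 := by field_simp
    rw [hy'] at this
    linarith
  -- C: key inequality
  have hC : (1 + y) * l ≤ 2 * (y - 1) := aux_key y hy0 hy1.le
  -- combine
  have h1 : y ^ β * l ≤ (y * (1 + (β - 1) * l)) * l :=
    mul_le_mul_of_nonpos_right hA hlneg.le
  have h2 : (β - α) * (1 - y) * l ≤ (β - 1/2) * (1 - y) * l := by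
    have hle : β - 1/2 ≤ β - α := by linarith
    have hneg : (1 - y) * l ≤ 0 :=
      mul_nonpos_of_nonneg_of_nonpos (by linarith) hlneg.le
    have := mul_le_mul_of_nonpos_right hle hneg
    calc (β - α) * (1 - y) * l = (β - α) * ((1-y) * l) := by ring
      _ ≤ (β - 1/2) * ((1-y) * l) := by
          exact mul_le_mul_of_nonpos_right hle hneg
      _ = (β - 1/2) * (1 - y) * l := by ring
  have h3 : (β - 1) * (l * (y * l + 1 - y)) ≤ 0 := by
    apply mul_nonpos_of_nonneg_of_nonpos (by linarith)
    exact mul_nonpos_of_nonpos_of_nonneg hlneg.le (by linarith)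
  nlinarith [h1, h2, h3, hC]
end

section
/- Let 0<q<1 and let α, β be real numbers with β≥0. Then lim_{x→∞} [ ψ_q(x+β) − log((1−q^x)/(1−q)) + (β−α)·(log q)·q^x/(1−q^x) ] = 0. -/
open Filter Real

lemma qdg_term_nonneg (q : ℝ) (hq0 : 0 < q) (hq1 : q < 1) (x : ℝ) (k : ℕ) :
    0 ≤ q ^ (((k : ℝ) + 1) * x) / (1 - q ^ (k + 1)) := by
  apply div_nonneg (Real.rpow_nonneg hq0.le _)
  have : q ^ (k + 1) < 1 := pow_lt_one₀ hq0.le hq1 (Nat.succ_ne_zero k)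
  linarith

lemma qdg_term_le (q : ℝ) (hq0 : 0 < q) (hq1 : q < 1) (x : ℝ) (hx : 1 ≤ x) (k : ℕ) :
    q ^ (((k : ℝ) + 1) * x) / (1 - q ^ (k + 1)) ≤ q ^ x * q ^ k / (1 - q) := by
  have hqx0 : (0:ℝ) ≤ q ^ x := Real.rpow_nonneg hq0.le _
  have hqxq : q ^ x ≤ q := by
    have := Real.rpow_le_rpow_of_exponent_ge hq0 hq1.le hx
    rwa [Real.rpow_one] at this
  have hnum : q ^ (((k : ℝ) + 1) * x) ≤ q ^ x * q ^ k := by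
    have h1 : q ^ (((k : ℝ) + 1) * x) = (q ^ x) ^ (k + 1) := by
      rw [mul_comm, Real.rpow_mul hq0.le]
      rw [show ((k : ℝ) + 1) = ((k + 1 : ℕ) : ℝ) by push_cast; ring, Real.rpow_natCast]
    rw [h1, pow_succ, mul_comm]
    exact mul_le_mul_of_nonneg_left (pow_le_pow_left₀ hqx0 hqxq k) hqx0
  have hden : 1 - q ≤ 1 - q ^ (k + 1) := by
    have : q ^ (k + 1) ≤ q := by
      simpa using pow_le_pow_of_le_one hq0.le hq1.le (Nat.one_le_iff_ne_zero.mpr (Nat.succ_ne_zero k))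
    linarith
  exact div_le_div₀ (by positivity) hnum (by linarith) hden

lemma qdg_sum_tendsto (q : ℝ) (hq0 : 0 < q) (hq1 : q < 1) :
    Tendsto (fun x : ℝ => ∑' k : ℕ, q ^ (((k : ℝ) + 1) * x) / (1 - q ^ (k + 1)))
      atTop (nhds 0) := by
  have hsumg : ∀ x : ℝ, Summable (fun k : ℕ => q ^ x * q ^ k / (1 - q)) := by
    intro x
    exact ((summable_geometric_of_lt_one hq0.le hq1).mul_left _).div_const _
  have hupper : Tendsto (fun x : ℝ => q ^ x * (1 - q)⁻¹ / (1 - q)) atTop (nhds 0) := by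
    have h := (tendsto_rpow_atTop_of_base_lt_one q (by linarith) hq1)
    have := (h.mul_const (1 - q)⁻¹).div_const (1 - q)
    simpa using this
  apply tendsto_of_tendsto_of_tendsto_of_le_of_le' tendsto_const_nhds hupper
  · filter_upwards with x
    exact tsum_nonneg (fun k => qdg_term_nonneg q hq0 hq1 x k)
  · filter_upwards [eventually_ge_atTop (1:ℝ)] with x hx
    have hsumf : Summable (fun k : ℕ => q ^ (((k : ℝ) + 1) * x) / (1 - q ^ (k + 1))) :=
      Summable.of_nonneg_of_le (qdg_term_nonneg q hq0 hq1 x) (qdg_term_le q hq0 hq1 x hx)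
        (hsumg x)
    calc ∑' k : ℕ, q ^ (((k : ℝ) + 1) * x) / (1 - q ^ (k + 1))
        ≤ ∑' k : ℕ, q ^ x * q ^ k / (1 - q) :=
          Summable.tsum_le_tsum (qdg_term_le q hq0 hq1 x hx) hsumf (hsumg x)
      _ = q ^ x * (1 - q)⁻¹ / (1 - q) := by
          rw [tsum_div_const, tsum_mul_left, tsum_geometric_of_lt_one hq0.le hq1]

/-- For `0 < q < 1`, real `α` and `β ≥ 0`,
`ψ_q(x+β) − log((1−q^x)/(1−q)) + (β−α)·(log q)·q^x/(1−q^x) → 0` as `x → ∞`. -/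
theorem tendsto_qDigamma_combination (q α β : ℝ) (hq0 : 0 < q) (hq1 : q < 1) (hβ : 0 ≤ β) :
    Filter.Tendsto
      (fun x : ℝ => qDigamma q (x + β) - Real.log ((1 - q ^ x) / (1 - q))
        + (β - α) * Real.log q * q ^ x / (1 - q ^ x))
      Filter.atTop (nhds 0) := by
  have h1q : (0:ℝ) < 1 - q := by linarith
  have hqx : Tendsto (fun x : ℝ => q ^ x) atTop (nhds 0) :=
    tendsto_rpow_atTop_of_base_lt_one q (by linarith) hq1
  -- part 1
  have h1 : Tendsto (fun x : ℝ => qDigamma q (x + β)) atTop (nhds (-Real.log (1 - q))) := by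
    have hS := (qdg_sum_tendsto q hq0 hq1).comp (tendsto_atTop_add_const_right atTop β tendsto_id)
    have h := ((tendsto_const_nhds : Tendsto (fun _ : ℝ => -Real.log (1 - q)) atTop _).add
      ((tendsto_const_nhds : Tendsto (fun _ : ℝ => Real.log q) atTop _).mul hS))
    simp only [mul_zero, add_zero] at h
    simpa [qDigamma, Function.comp] using h
  -- part 2
  have h2 : Tendsto (fun x : ℝ => Real.log ((1 - q ^ x) / (1 - q))) atTop
      (nhds (-Real.log (1 - q))) := by
    have hfrac : Tendsto (fun x : ℝ => (1 - q ^ x) / (1 - q)) atTop (nhds ((1 - 0) / (1 - q))) :=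
      (tendsto_const_nhds.sub hqx).div_const _
    have := hfrac.log (by positivity)
    rwa [show Real.log ((1 - 0) / (1 - q)) = -Real.log (1 - q) by
      rw [sub_zero, Real.log_div one_ne_zero h1q.ne', Real.log_one, zero_sub]] at this
  -- part 3
  have h3 : Tendsto (fun x : ℝ => (β - α) * Real.log q * q ^ x / (1 - q ^ x)) atTop (nhds 0) := by
    have hnum : Tendsto (fun x : ℝ => (β - α) * Real.log q * q ^ x) atTop (nhds 0) := by
      simpa using hqx.const_mul ((β - α) * Real.log q)
    have hden : Tendsto (fun x : ℝ => 1 - q ^ x) atTop (nhds 1) := by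
      simpa using tendsto_const_nhds.sub hqx
    have h := hnum.div hden one_ne_zero
    rw [zero_div] at h
    exact h
  have := (h1.sub h2).add h3
  simpa using this
end
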